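/- arXiv:2602.21241 — 4 statements merged into one kernel-verified Lean document; each statement's English description precedes it below -/
import Mathlib

section
/- Let I₀ and I₁ be the modified Bessel functions of integer order. Then the function μ ↦ I₁(μ)/I₀(μ) is strictly increasing on ℝ, and I₁(μ)/I₀(μ) tends to 1 as μ → +∞. -/
open Real Filter intervalIntegral MeasureTheory

/-- The modified Bessel function of integer order `n`:
`Iₙ(μ) = (1/(2π)) ∫₀^{2π} e^{μ cos θ} cos (n θ) dθ`. -/
noncomputable def besselI (n : ℤ) (μ : ℝ) : ℝ :=
  (1 / (2 * Real.pi)) * ∫ θ in (0:ℝ)..(2 * Real.pi),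
    Real.exp (μ * Real.cos θ) * Real.cos ((n : ℝ) * θ)

noncomputable def bF (μ : ℝ) : ℝ := ∫ θ in (0:ℝ)..(2*π), Real.exp (μ * Real.cos θ)
noncomputable def bG (μ : ℝ) : ℝ := ∫ θ in (0:ℝ)..(2*π), Real.exp (μ * Real.cos θ) * Real.cos θ

lemma iiF (μ a b : ℝ) : IntervalIntegrable (fun θ => Real.exp (μ * Real.cos θ)) volume a b :=
  (by fun_prop : Continuous fun θ => Real.exp (μ * Real.cos θ)).intervalIntegrable a b

lemma iiG (μ a b : ℝ) : IntervalIntegrable (fun θ => Real.exp (μ * Real.cos θ) * Real.cos θ) volume a b :=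
  (by fun_prop : Continuous fun θ => Real.exp (μ * Real.cos θ) * Real.cos θ).intervalIntegrable a b

lemma bF_pos (μ : ℝ) : 0 < bF μ :=
  intervalIntegral_pos_of_pos (iiF μ 0 (2*π)) (fun x => Real.exp_pos _) (by positivity)

lemma bG_le_bF (μ : ℝ) : bG μ ≤ bF μ := by
  apply integral_mono_on (by positivity) (iiG μ 0 (2*π)) (iiF μ 0 (2*π))
  intro θ _
  nlinarith [Real.exp_pos (μ * Real.cos θ), Real.cos_le_one θ]

/-- split positivity helper -/
lemma integral_pos_of_sub {F : ℝ → ℝ} (hc : Continuous F) (hnn : ∀ x, 0 ≤ F x)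
    {a b c d : ℝ} (hac : a ≤ c) (hcd : c < d) (hdb : d ≤ b)
    (hpos : ∀ x ∈ Set.Ioo c d, 0 < F x) : 0 < ∫ x in a..b, F x := by
  have h2 : (∫ x in c..d, F x) + (∫ x in d..b, F x) = ∫ x in c..b, F x := by
    apply integral_add_adjacent_intervals <;> exact hc.intervalIntegrable _ _
  have h1 : (∫ x in a..c, F x) + (∫ x in c..b, F x) = ∫ x in a..b, F x := by
    apply integral_add_adjacent_intervals <;> exact hc.intervalIntegrable _ _
  have p1 : 0 ≤ ∫ x in a..c, F x := integral_nonneg hac fun x _ => hnn x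
  have p3 : 0 ≤ ∫ x in d..b, F x := integral_nonneg hdb fun x _ => hnn x
  have p2 : 0 < ∫ x in c..d, F x :=
    intervalIntegral_pos_of_pos_on (hc.intervalIntegrable _ _) hpos hcd
  linarith

lemma key_mono {μ ν : ℝ} (h : μ < ν) : bG μ * bF ν < bG ν * bF μ := by
  set P : ℝ → ℝ → ℝ := fun θ φ =>
    (Real.cos θ - Real.cos φ) *
      (Real.exp (ν * Real.cos θ) * Real.exp (μ * Real.cos φ) -
        Real.exp (μ * Real.cos θ) * Real.exp (ν * Real.cos φ)) with hP
  have hnn : ∀ θ φ, 0 ≤ P θ φ := by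
    intro θ φ
    rcases le_total (Real.cos φ) (Real.cos θ) with hle | hle
    · apply mul_nonneg (by linarith)
      rw [← Real.exp_add, ← Real.exp_add, sub_nonneg, Real.exp_le_exp]
      nlinarith
    · have h2 : Real.exp (ν * Real.cos θ) * Real.exp (μ * Real.cos φ) -
          Real.exp (μ * Real.cos θ) * Real.exp (ν * Real.cos φ) ≤ 0 := by
        rw [← Real.exp_add, ← Real.exp_add, sub_nonpos, Real.exp_le_exp]
        nlinarith
      simp only [hP]
      nlinarith
  have hpos : ∀ θ φ, Real.cos θ < Real.cos φ → 0 < P θ φ := by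
    intro θ φ hlt
    apply mul_pos_of_neg_of_neg (by linarith)
    rw [← Real.exp_add, ← Real.exp_add, sub_neg, Real.exp_lt_exp]
    nlinarith
  set Q : ℝ → ℝ := fun θ =>
    Real.cos θ * Real.exp (ν * Real.cos θ) * bF μ - Real.cos θ * Real.exp (μ * Real.cos θ) * bF ν
      - Real.exp (ν * Real.cos θ) * bG μ + Real.exp (μ * Real.cos θ) * bG ν with hQdef
  have hQ : ∀ θ, (∫ φ in (0:ℝ)..(2*π), P θ φ) = Q θ := by
    intro θ
    have e1 : (fun φ => P θ φ) = fun φ =>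
        ((Real.cos θ * Real.exp (ν * Real.cos θ)) * Real.exp (μ * Real.cos φ)
          - (Real.cos θ * Real.exp (μ * Real.cos θ)) * Real.exp (ν * Real.cos φ))
        + (-(Real.exp (ν * Real.cos θ)) * (Real.exp (μ * Real.cos φ) * Real.cos φ)
          + Real.exp (μ * Real.cos θ) * (Real.exp (ν * Real.cos φ) * Real.cos φ)) := by
      funext φ; simp only [hP]; ring
    rw [e1, intervalIntegral.integral_add, intervalIntegral.integral_sub, intervalIntegral.integral_add]
    · rw [intervalIntegral.integral_const_mul, intervalIntegral.integral_const_mul, intervalIntegral.integral_const_mul, intervalIntegral.integral_const_mul]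
      simp only [hQdef, bF, bG]; ring
    · exact ((iiG μ 0 (2*π)).const_mul _)
    · exact ((iiG ν 0 (2*π)).const_mul _)
    · exact ((iiF μ 0 (2*π)).const_mul _)
    · exact ((iiF ν 0 (2*π)).const_mul _)
    · exact (((iiF μ 0 (2*π)).const_mul _).sub ((iiF ν 0 (2*π)).const_mul _))
    · exact (((iiG μ 0 (2*π)).const_mul _).add ((iiG ν 0 (2*π)).const_mul _))
  have hD : (∫ θ in (0:ℝ)..(2*π), Q θ) = 2 * (bG ν * bF μ - bG μ * bF ν) := by
    have e2 : (fun θ => Q θ) = fun θ =>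
        (bF μ * (Real.exp (ν * Real.cos θ) * Real.cos θ)
          - bF ν * (Real.exp (μ * Real.cos θ) * Real.cos θ))
        + (-(bG μ) * Real.exp (ν * Real.cos θ) + bG ν * Real.exp (μ * Real.cos θ)) := by
      funext θ; simp only [hQdef]; ring
    rw [e2, intervalIntegral.integral_add, intervalIntegral.integral_sub, intervalIntegral.integral_add]
    · rw [intervalIntegral.integral_const_mul, intervalIntegral.integral_const_mul, intervalIntegral.integral_const_mul, intervalIntegral.integral_const_mul]
      simp only [bF, bG]; ring
    · exact ((iiF ν 0 (2*π)).const_mul _)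
    · exact ((iiF μ 0 (2*π)).const_mul _)
    · exact ((iiG ν 0 (2*π)).const_mul _)
    · exact ((iiG μ 0 (2*π)).const_mul _)
    · exact (((iiG ν 0 (2*π)).const_mul _).sub ((iiG μ 0 (2*π)).const_mul _))
    · exact (((iiF ν 0 (2*π)).const_mul _).add ((iiF μ 0 (2*π)).const_mul _))
  have hQnn : ∀ θ, 0 ≤ Q θ := by
    intro θ
    rw [← hQ θ]
    exact integral_nonneg (by positivity) fun φ _ => hnn θ φ
  have hQcont : Continuous Q := by
    simp only [hQdef]; fun_prop
  have hQpos : ∀ θ ∈ Set.Ioo (π/2) π, 0 < Q θ := by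
    intro θ hθ
    rw [← hQ θ]
    have hcosθ : Real.cos θ < 0 :=
      Real.cos_neg_of_pi_div_two_lt_of_lt hθ.1 (by nlinarith [pi_pos, hθ.2])
    refine integral_pos_of_sub (c := π/6) (d := π/3) (by fun_prop) (hnn θ)
      (le_of_lt (by positivity : (0:ℝ) < π/6)) (by linarith [pi_pos]) (by linarith [pi_pos]) ?_
    intro φ hφ
    apply hpos
    have : 0 < Real.cos φ := Real.cos_pos_of_mem_Ioo
      ⟨by linarith [pi_pos, hφ.1], by linarith [pi_pos, hφ.2]⟩
    linarith
  have hDpos : 0 < ∫ θ in (0:ℝ)..(2*π), Q θ :=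
    integral_pos_of_sub hQcont hQnn (by positivity) (by linarith [pi_pos]) (by linarith [pi_pos]) hQpos
  rw [hD] at hDpos
  linarith

lemma iiN (μ a b : ℝ) : IntervalIntegrable (fun θ => (1 - Real.cos θ) * Real.exp (μ * Real.cos θ)) volume a b :=
  (by fun_prop : Continuous fun θ => (1 - Real.cos θ) * Real.exp (μ * Real.cos θ)).intervalIntegrable a b

lemma sub_bound {δ : ℝ} (hδ0 : 0 < δ) (hδ1 : δ < 1) {μ : ℝ} (hμ : 0 ≤ μ) :
    bF μ - bG μ ≤ δ * bF μ + 4 * π * Real.exp (μ * (1 - δ)) := by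
  set r := Real.arccos (1 - δ) with hr
  have hd1 : (-1:ℝ) ≤ 1 - δ := by linarith
  have hd2 : (1 - δ:ℝ) ≤ 1 := by linarith
  have hcr : Real.cos r = 1 - δ := Real.cos_arccos hd1 hd2
  have hr0 : 0 < r := Real.arccos_pos.mpr (by linarith)
  have hrπ : r ≤ π := Real.arccos_le_pi _
  have hrr : r ≤ 2*π - r := by linarith [pi_pos]
  -- N = ∫ (1-cos) exp
  have hN : bF μ - bG μ = ∫ θ in (0:ℝ)..(2*π), (1 - Real.cos θ) * Real.exp (μ * Real.cos θ) := by
    rw [bF, bG, ← intervalIntegral.integral_sub (iiF μ 0 (2*π)) (iiG μ 0 (2*π))]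
    apply integral_congr; intro θ _; ring
  have split1 : (∫ θ in (0:ℝ)..r, (1 - Real.cos θ) * Real.exp (μ * Real.cos θ))
      + (∫ θ in r..(2*π - r), (1 - Real.cos θ) * Real.exp (μ * Real.cos θ))
      + (∫ θ in (2*π - r)..(2*π), (1 - Real.cos θ) * Real.exp (μ * Real.cos θ))
      = ∫ θ in (0:ℝ)..(2*π), (1 - Real.cos θ) * Real.exp (μ * Real.cos θ) := by
    rw [integral_add_adjacent_intervals (iiN μ 0 r) (iiN μ r (2*π - r)),
        integral_add_adjacent_intervals (iiN μ 0 (2*π - r)) (iiN μ (2*π - r) (2*π))]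
  have splitF : (∫ θ in (0:ℝ)..r, Real.exp (μ * Real.cos θ))
      + (∫ θ in r..(2*π - r), Real.exp (μ * Real.cos θ))
      + (∫ θ in (2*π - r)..(2*π), Real.exp (μ * Real.cos θ)) = bF μ := by
    rw [bF, integral_add_adjacent_intervals (iiF μ 0 r) (iiF μ r (2*π - r)),
        integral_add_adjacent_intervals (iiF μ 0 (2*π - r)) (iiF μ (2*π - r) (2*π))]
  -- piece 1
  have b1 : (∫ θ in (0:ℝ)..r, (1 - Real.cos θ) * Real.exp (μ * Real.cos θ))
      ≤ δ * ∫ θ in (0:ℝ)..r, Real.exp (μ * Real.cos θ) := by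
    rw [← intervalIntegral.integral_const_mul]
    apply integral_mono_on hr0.le (iiN μ 0 r)  ((iiF μ 0 r).const_mul δ)
    intro θ hθ
    have : Real.cos r ≤ Real.cos θ :=
      Real.cos_le_cos_of_nonneg_of_le_pi hθ.1 hrπ hθ.2
    have h1 : 1 - Real.cos θ ≤ δ := by rw [hcr] at this; linarith
    have := Real.exp_pos (μ * Real.cos θ)
    nlinarith
  -- piece 3
  have b3 : (∫ θ in (2*π - r)..(2*π), (1 - Real.cos θ) * Real.exp (μ * Real.cos θ))
      ≤ δ * ∫ θ in (2*π - r)..(2*π), Real.exp (μ * Real.cos θ) := by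
    rw [← intervalIntegral.integral_const_mul]
    apply integral_mono_on (by linarith) (iiN μ _ _) ((iiF μ _ _).const_mul δ)
    intro θ hθ
    have hc : Real.cos θ = Real.cos (2*π - θ) := by
      rw [Real.cos_two_pi_sub]
    have : Real.cos r ≤ Real.cos (2*π - θ) :=
      Real.cos_le_cos_of_nonneg_of_le_pi (by linarith [hθ.2]) hrπ (by linarith [hθ.1])
    have h1 : 1 - Real.cos θ ≤ δ := by rw [hc]; linarith [hcr]
    have := Real.exp_pos (μ * Real.cos θ)
    nlinarith
  -- piece 2
  have b2 : (∫ θ in r..(2*π - r), (1 - Real.cos θ) * Real.exp (μ * Real.cos θ))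
      ≤ 4 * π * Real.exp (μ * (1 - δ)) := by
    have hb : (∫ θ in r..(2*π - r), (1 - Real.cos θ) * Real.exp (μ * Real.cos θ))
        ≤ ∫ _θ in r..(2*π - r), 2 * Real.exp (μ * (1 - δ)) := by
      apply integral_mono_on hrr (iiN μ _ _)
        (intervalIntegrable_const)
      intro θ hθ
      have hcos : Real.cos θ ≤ 1 - δ := by
        rcases le_total θ π with hle | hle
        · have := Real.cos_le_cos_of_nonneg_of_le_pi hr0.le hle hθ.1
          rw [hcr] at this; linarith
        · have h2 : Real.cos θ = Real.cos (2*π - θ) := by rw [Real.cos_two_pi_sub]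
          have := Real.cos_le_cos_of_nonneg_of_le_pi hr0.le (by linarith : 2*π - θ ≤ π)
            (by linarith [hθ.2])
          rw [hcr] at this; linarith
      have he : Real.exp (μ * Real.cos θ) ≤ Real.exp (μ * (1 - δ)) := by
        apply Real.exp_le_exp.mpr
        exact mul_le_mul_of_nonneg_left hcos hμ
      have h1 : 1 - Real.cos θ ≤ 2 := by linarith [Real.neg_one_le_cos θ]
      have h0 : 0 ≤ 1 - Real.cos θ := by linarith [Real.cos_le_one θ]
      nlinarith [Real.exp_pos (μ * Real.cos θ)]
    rw [intervalIntegral.integral_const] at hb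
    have : (2*π - r - r) • (2 * Real.exp (μ * (1 - δ))) ≤ 4 * π * Real.exp (μ * (1 - δ)) := by
      rw [smul_eq_mul]
      nlinarith [Real.exp_pos (μ * (1 - δ)), hr0, pi_pos]
    linarith
  -- middle F-piece nonneg
  have hFmid : 0 ≤ ∫ θ in r..(2*π - r), Real.exp (μ * Real.cos θ) :=
    integral_nonneg hrr fun θ _ => (Real.exp_pos _).le
  have hsum : δ * (∫ θ in (0:ℝ)..r, Real.exp (μ * Real.cos θ))
      + δ * (∫ θ in (2*π - r)..(2*π), Real.exp (μ * Real.cos θ)) ≤ δ * bF μ := by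
    nlinarith [hFmid, splitF]
  rw [hN, ← split1]
  linarith

lemma bF_lower {δ : ℝ} (hδ0 : 0 < δ) (hδ1 : δ < 1) {μ : ℝ} (hμ : 0 ≤ μ) :
    (Real.arccos (1-δ)/2) * Real.exp (μ * Real.cos (Real.arccos (1-δ)/2)) ≤ bF μ := by
  set r := Real.arccos (1 - δ) with hrdef
  have hr0 : 0 < r := Real.arccos_pos.mpr (by linarith)
  have hrπ : r ≤ π := Real.arccos_le_pi _
  have hs : 0 < r/2 := by linarith
  have split : (∫ θ in (0:ℝ)..(r/2), Real.exp (μ * Real.cos θ))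
      + (∫ θ in (r/2)..(2*π), Real.exp (μ * Real.cos θ)) = bF μ := by
    rw [bF, integral_add_adjacent_intervals (iiF μ 0 (r/2)) (iiF μ (r/2) (2*π))]
  have h2 : 0 ≤ ∫ θ in (r/2)..(2*π), Real.exp (μ * Real.cos θ) :=
    integral_nonneg (by linarith [pi_pos]) fun θ _ => (Real.exp_pos _).le
  have h1 : (r/2) * Real.exp (μ * Real.cos (r/2)) ≤ ∫ θ in (0:ℝ)..(r/2), Real.exp (μ * Real.cos θ) := by
    have := integral_mono_on (μ := volume) hs.le intervalIntegrable_const (iiF μ 0 (r/2))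
      (g := fun θ => Real.exp (μ * Real.cos θ)) (f := fun _ => Real.exp (μ * Real.cos (r/2)))
      ?_
    · rw [intervalIntegral.integral_const, smul_eq_mul] at this
      calc (r/2) * Real.exp (μ * Real.cos (r/2)) = (r/2 - 0) * Real.exp (μ * Real.cos (r/2)) := by ring
        _ ≤ _ := this
    · intro θ hθ
      apply Real.exp_le_exp.mpr
      apply mul_le_mul_of_nonneg_left _ hμ
      exact Real.cos_le_cos_of_nonneg_of_le_pi hθ.1 (by linarith) hθ.2
  linarith

lemma besselI_zero (μ : ℝ) : besselI 0 μ = (1 / (2*π)) * bF μ := by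
  rw [besselI, bF]
  congr 1
  apply integral_congr
  intro θ _
  norm_num

lemma besselI_one (μ : ℝ) : besselI 1 μ = (1 / (2*π)) * bG μ := by
  rw [besselI, bG]
  congr 1
  apply integral_congr
  intro θ _
  norm_num

lemma ratio_eq (μ : ℝ) : besselI 1 μ / besselI 0 μ = bG μ / bF μ := by
  rw [besselI_zero, besselI_one, mul_div_mul_left]
  positivity

/-- The function `μ ↦ I₁(μ)/I₀(μ)` is strictly increasing on `ℝ` and tends to `1`
as `μ → +∞`. -/
theorem besselI_ratio_strictMono_tendsto_one :
    StrictMono (fun μ : ℝ => besselI 1 μ / besselI 0 μ) ∧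
    Tendsto (fun μ : ℝ => besselI 1 μ / besselI 0 μ) atTop (nhds 1) := by
  have hfun : (fun μ : ℝ => besselI 1 μ / besselI 0 μ) = fun μ => bG μ / bF μ := by
    funext μ; exact ratio_eq μ
  rw [hfun]
  constructor
  · intro μ ν h
    simp only
    rw [div_lt_div_iff₀ (bF_pos μ) (bF_pos ν)]
    exact key_mono h
  · rw [Metric.tendsto_atTop]
    intro ε hε
    set δ : ℝ := min (ε/4) (1/2) with hδdef
    have hδ0 : 0 < δ := lt_min (by linarith) (by norm_num)
    have hδ1 : δ < 1 := lt_of_le_of_lt (min_le_right _ _) (by norm_num)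
    have hδε : δ ≤ ε/4 := min_le_left _ _
    set r := Real.arccos (1 - δ) with hrdef
    have hr0 : 0 < r := Real.arccos_pos.mpr (by linarith)
    have hrπ : r ≤ π := Real.arccos_le_pi _
    have hcr : Real.cos r = 1 - δ := Real.cos_arccos (by linarith) (by linarith)
    set s := r/2 with hsdef
    have hs0 : 0 < s := by positivity
    have hc : 1 - δ < Real.cos s := by
      rw [← hcr]
      exact Real.cos_lt_cos_of_nonneg_of_le_pi hs0.le hrπ (by linarith)
    set c := Real.cos s - (1 - δ) with hcdef
    have hc0 : 0 < c := by linarith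
    set K := (4 * π) / (s * δ) with hKdef
    have hK0 : 0 < K := by positivity
    refine ⟨max 0 (Real.log K / c + 1), ?_⟩
    intro μ hμ
    have hμ0 : 0 ≤ μ := le_trans (le_max_left _ _) hμ
    have hμK : Real.log K / c + 1 ≤ μ := le_trans (le_max_right _ _) hμ
    -- exp(-c μ) < s δ / (4π)
    have hexp : Real.exp (-(c*μ)) < s * δ / (4*π) := by
      have h1 : Real.log K < c * μ := by
        have : Real.log K ≤ c * (Real.log K / c + 1) - c := by
          field_simp
          linarith
        nlinarith [mul_le_mul_of_nonneg_left hμK hc0.le]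
      have h2 : K < Real.exp (c * μ) := by
        rw [← Real.exp_log hK0] ; exact Real.exp_lt_exp.mpr h1
      rw [Real.exp_neg]
      rw [inv_lt_comm₀ (Real.exp_pos _) (by positivity)] at *
      · have : (s * δ / (4*π))⁻¹ = K := by
          rw [hKdef]; field_simp
        rw [this]; exact h2
    -- main chain
    have hsb := sub_bound hδ0 hδ1 hμ0
    have hfl := bF_lower hδ0 hδ1 hμ0
    have hfl' : s * Real.exp (μ * Real.cos s) ≤ bF μ := hfl
    have hEsplit : Real.exp (μ * (1 - δ)) = Real.exp (μ * Real.cos s) * Real.exp (-(c*μ)) := by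
      rw [← Real.exp_add]; congr 1; rw [hcdef]; ring
    have hbound : bF μ - bG μ ≤ 2 * δ * bF μ := by
      have h4 : 4 * π * Real.exp (μ * (1 - δ)) ≤ δ * (s * Real.exp (μ * Real.cos s)) := by
        rw [hEsplit]
        have := mul_le_mul_of_nonneg_left hexp.le
          (by positivity : (0:ℝ) ≤ 4 * π * Real.exp (μ * Real.cos s))
        calc 4 * π * (Real.exp (μ * Real.cos s) * Real.exp (-(c*μ)))
            = 4 * π * Real.exp (μ * Real.cos s) * Real.exp (-(c*μ)) := by ring
          _ ≤ 4 * π * Real.exp (μ * Real.cos s) * (s * δ / (4*π)) := this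
          _ = δ * (s * Real.exp (μ * Real.cos s)) := by field_simp
      have h5 : δ * (s * Real.exp (μ * Real.cos s)) ≤ δ * bF μ :=
        mul_le_mul_of_nonneg_left hfl' hδ0.le
      linarith
    have hfp := bF_pos μ
    have hle1 : bG μ / bF μ ≤ 1 := (div_le_one hfp).mpr (bG_le_bF μ)
    have hge : 1 - bG μ / bF μ ≤ 2 * δ := by
      have h6 : (bF μ - bG μ) / bF μ ≤ 2 * δ := by
        rw [div_le_iff₀ hfp]; nlinarith
      rwa [sub_div, div_self hfp.ne'] at h6
    rw [Real.dist_eq, abs_lt]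
    constructor <;> nlinarith
end

section
/- There exists a constant C > 0 such that for all μ ∈ ℝ, |2μ + I₀(μ)/(I₀(μ)+I₁(μ)) − I₀(μ)/(I₀(μ)−I₁(μ))| ≤ C. (This quantity is the derivative with respect to q of the correction term ΔS = S − Ŝ in the two-dimensional entropy decomposition, expressed in the variable μ; its uniform boundedness is the content of Proposition 2.2.) -/
open Real Filter intervalIntegral

namespace BesselAux

noncomputable def A (μ : ℝ) : ℝ := ∫ θ in (0:ℝ)..(2*π), exp (μ * cos θ)
noncomputable def B (μ : ℝ) : ℝ := ∫ θ in (0:ℝ)..(2*π), exp (μ * cos θ) * cos θ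
noncomputable def L (μ : ℝ) : ℝ := ∫ θ in (0:ℝ)..(2*π), exp (μ * cos θ) * (1 - cos θ)
noncomputable def Q (μ : ℝ) : ℝ := ∫ θ in (0:ℝ)..(2*π), exp (μ * cos θ) * (1 - cos θ)^2

lemma besselI0_eq (μ : ℝ) : besselI 0 μ = (1 / (2*π)) * A μ := by
  unfold besselI A; norm_num

lemma besselI1_eq (μ : ℝ) : besselI 1 μ = (1 / (2*π)) * B μ := by
  unfold besselI B; norm_num

lemma contA (μ : ℝ) : Continuous fun θ => exp (μ * cos θ) := by fun_prop

lemma intgA (μ : ℝ) : IntervalIntegrable (fun θ => exp (μ * cos θ)) MeasureTheory.volume 0 (2*π) :=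
  (contA μ).intervalIntegrable _ _

lemma L_intgr (μ : ℝ) (a b : ℝ) :
    IntervalIntegrable (fun θ => exp (μ * cos θ) * (1 - cos θ)) MeasureTheory.volume a b :=
  (by fun_prop : Continuous _).intervalIntegrable _ _

lemma hL_eq (μ : ℝ) : L μ = A μ - B μ := by
  unfold L A B
  rw [← intervalIntegral.integral_sub (g := fun θ => exp (μ * cos θ) * cos θ) (intgA μ) (((contA μ).mul continuous_cos).intervalIntegrable _ _)]
  congr 1; ext θ; ring

lemma key_fct (μ : ℝ) :
    (∫ θ in (0:ℝ)..(2*π), exp (μ * cos θ) * (cos θ - μ * sin θ ^ 2)) = 0 := by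
  have h : ∀ θ ∈ Set.uIcc (0:ℝ) (2*π),
      HasDerivAt (fun θ => exp (μ * cos θ) * sin θ)
        (exp (μ * cos θ) * (cos θ - μ * sin θ ^ 2)) θ := by
    intro θ _
    have h1 : HasDerivAt (fun θ => exp (μ * cos θ)) (exp (μ * cos θ) * (μ * (-sin θ))) θ :=
      (((Real.hasDerivAt_cos θ).const_mul μ).exp)
    have := h1.mul (Real.hasDerivAt_sin θ)
    exact this.congr_deriv (by ring)
  have hint : IntervalIntegrable (fun θ => exp (μ * cos θ) * (cos θ - μ * sin θ ^ 2))
      MeasureTheory.volume 0 (2*π) :=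
    (by fun_prop : Continuous _).intervalIntegrable _ _
  have := intervalIntegral.integral_eq_sub_of_hasDerivAt h hint
  simpa using this

lemma B_eq (μ : ℝ) : B μ = μ * (2 * L μ - Q μ) := by
  have h := key_fct μ
  have e1 : ∀ θ : ℝ, exp (μ * cos θ) * (cos θ - μ * sin θ ^ 2)
      = exp (μ * cos θ) * cos θ
        - μ * (2 * (exp (μ * cos θ) * (1 - cos θ)) - exp (μ * cos θ) * (1 - cos θ)^2) := by
    intro θ
    have : sin θ ^ 2 = 1 - cos θ ^ 2 := Real.sin_sq θ
    rw [this]; ring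
  have hc1 : IntervalIntegrable (fun θ => exp (μ * cos θ) * cos θ) MeasureTheory.volume 0 (2*π) :=
    (by fun_prop : Continuous _).intervalIntegrable _ _
  have hc2 : IntervalIntegrable (fun θ => 2 * (exp (μ * cos θ) * (1 - cos θ)) - exp (μ * cos θ) * (1 - cos θ)^2) MeasureTheory.volume 0 (2*π) :=
    (by fun_prop : Continuous _).intervalIntegrable _ _
  rw [show (fun θ => exp (μ * cos θ) * (cos θ - μ * sin θ ^ 2))
      = fun θ => exp (μ * cos θ) * cos θ
        - μ * (2 * (exp (μ * cos θ) * (1 - cos θ)) - exp (μ * cos θ) * (1 - cos θ)^2) from funext e1] at h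
  rw [intervalIntegral.integral_sub hc1 (hc2.const_mul μ), intervalIntegral.integral_const_mul,
    intervalIntegral.integral_sub ((by fun_prop : Continuous _).intervalIntegrable _ _ :
      IntervalIntegrable (fun θ => 2*(exp (μ * cos θ) * (1 - cos θ))) MeasureTheory.volume 0 (2*π))
      ((by fun_prop : Continuous _).intervalIntegrable _ _),
    intervalIntegral.integral_const_mul] at h
  unfold B L Q
  linarith [h]

lemma A_pos (μ : ℝ) : 0 < A μ := by
  unfold A
  apply intervalIntegral.intervalIntegral_pos_of_pos_on
  · exact intgA μ
  · intro x _; positivity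
  · positivity

lemma Q_nonneg (μ : ℝ) : 0 ≤ Q μ := by
  unfold Q
  apply intervalIntegral.integral_nonneg (by positivity)
  intro x _; positivity

lemma Q_le_two_L (μ : ℝ) : Q μ ≤ 2 * L μ := by
  unfold Q L
  rw [← intervalIntegral.integral_const_mul]
  apply intervalIntegral.integral_mono_on (by positivity)
  · exact (by fun_prop : Continuous _).intervalIntegrable _ _
  · exact (by fun_prop : Continuous _).intervalIntegrable _ _
  · intro x _
    have h1 : cos x ≤ 1 := Real.cos_le_one x
    have h2 : -1 ≤ cos x := Real.neg_one_le_cos x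
    have h3 : (0:ℝ) < exp (μ * cos x) := Real.exp_pos _
    nlinarith [mul_nonneg h3.le (mul_nonneg (sub_nonneg.2 h1) (by linarith : (0:ℝ) ≤ 1 + cos x))]

lemma L_nonneg_piece (μ a b : ℝ) (hab : a ≤ b) :
    0 ≤ ∫ θ in a..b, exp (μ * cos θ) * (1 - cos θ) := by
  apply intervalIntegral.integral_nonneg hab
  intro x _
  have := Real.cos_le_one x
  have := Real.exp_pos (μ * cos x)
  nlinarith

lemma L_pos (μ : ℝ) : 0 < L μ := by
  have pi_pos := Real.pi_pos
  have hsplit : L μ = (∫ θ in (0:ℝ)..(π/2), exp (μ * cos θ) * (1 - cos θ))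
      + ((∫ θ in (π/2)..(3*π/2), exp (μ * cos θ) * (1 - cos θ))
      + (∫ θ in (3*π/2)..(2*π), exp (μ * cos θ) * (1 - cos θ))) := by
    unfold L
    rw [intervalIntegral.integral_add_adjacent_intervals (L_intgr μ _ _) (L_intgr μ _ _),
      intervalIntegral.integral_add_adjacent_intervals (L_intgr μ _ _) (L_intgr μ _ _)]
  have h1 : 0 ≤ ∫ θ in (0:ℝ)..(π/2), exp (μ * cos θ) * (1 - cos θ) :=
    L_nonneg_piece μ _ _ (by positivity)
  have h3 : 0 ≤ ∫ θ in (3*π/2)..(2*π), exp (μ * cos θ) * (1 - cos θ) :=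
    L_nonneg_piece μ _ _ (by linarith)
  have h2 : 0 < ∫ θ in (π/2)..(3*π/2), exp (μ * cos θ) * (1 - cos θ) := by
    apply intervalIntegral.intervalIntegral_pos_of_pos_on (L_intgr μ _ _)
    · intro x hx
      obtain ⟨hx1, hx2⟩ := hx
      have hc : cos x ≤ 0 :=
        Real.cos_nonpos_of_pi_div_two_le_of_le hx1.le (by linarith)
      have := Real.exp_pos (μ * cos x)
      nlinarith
    · linarith
  linarith [hsplit]

lemma A_neg (μ : ℝ) : A (-μ) = A μ := by
  unfold A
  have hper : Function.Periodic (fun θ : ℝ => exp (-μ * cos θ)) (2*π) :=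
    Real.cos_periodic.comp (fun y => exp (-μ * y))
  have h1 : (∫ θ in (0:ℝ)..(0+2*π), exp (-μ * cos θ))
      = ∫ θ in (π:ℝ)..(π+2*π), exp (-μ * cos θ) := hper.intervalIntegral_add_eq 0 π
  have h2 : (∫ θ in (0:ℝ)..(2*π), exp (-μ * cos (θ + π)))
      = ∫ θ in (0+π:ℝ)..(2*π+π), exp (-μ * cos θ) :=
    intervalIntegral.integral_comp_add_right (fun θ => exp (-μ * cos θ)) π
  have h3 : ∀ θ : ℝ, exp (-μ * cos (θ + π)) = exp (μ * cos θ) := by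
    intro θ; rw [Real.cos_add_pi]; ring_nf
  calc (∫ θ in (0:ℝ)..(2*π), exp (-μ * cos θ))
      = ∫ θ in (π:ℝ)..(π+2*π), exp (-μ * cos θ) := by rw [← h1]; norm_num
    _ = ∫ θ in (0:ℝ)..(2*π), exp (-μ * cos (θ + π)) := by
        rw [h2]; congr 1 <;> ring
    _ = ∫ θ in (0:ℝ)..(2*π), exp (μ * cos θ) := by
        congr 1; ext θ; exact h3 θ

lemma B_neg (μ : ℝ) : B (-μ) = - B μ := by
  unfold B
  have hper : Function.Periodic (fun θ : ℝ => exp (-μ * cos θ) * cos θ) (2*π) := by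
    intro x; simp [Real.cos_add_two_pi]
  have h1 : (∫ θ in (0:ℝ)..(0+2*π), exp (-μ * cos θ) * cos θ)
      = ∫ θ in (π:ℝ)..(π+2*π), exp (-μ * cos θ) * cos θ := hper.intervalIntegral_add_eq 0 π
  have h2 : (∫ θ in (0:ℝ)..(2*π), exp (-μ * cos (θ + π)) * cos (θ + π))
      = ∫ θ in (0+π:ℝ)..(2*π+π), exp (-μ * cos θ) * cos θ :=
    intervalIntegral.integral_comp_add_right (fun θ => exp (-μ * cos θ) * cos θ) π
  calc (∫ θ in (0:ℝ)..(2*π), exp (-μ * cos θ) * cos θ)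
      = ∫ θ in (π:ℝ)..(π+2*π), exp (-μ * cos θ) * cos θ := by rw [← h1]; norm_num
    _ = ∫ θ in (0:ℝ)..(2*π), exp (-μ * cos (θ + π)) * cos (θ + π) := by
        rw [h2]; congr 1 <;> ring
    _ = ∫ θ in (0:ℝ)..(2*π), -(exp (μ * cos θ) * cos θ) := by
        congr 1; ext θ; rw [Real.cos_add_pi]; ring_nf
    _ = - ∫ θ in (0:ℝ)..(2*π), exp (μ * cos θ) * cos θ := intervalIntegral.integral_neg

lemma exp_int_bound {c : ℝ} (hc : 0 < c) :
    (∫ θ in (0:ℝ)..(2*π), exp (-c * θ)) ≤ 1/c := by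
  have h := integral_comp_mul_left (fun x => exp x) (c := -c) (a := (0:ℝ)) (b := 2*π) (by linarith : -c ≠ 0)
  rw [integral_exp] at h
  rw [h, smul_eq_mul]
  have h1 : exp (-c * (2*π)) ≤ 1 := by
    apply Real.exp_le_one_iff.mpr ?_; nlinarith [Real.pi_pos]
  have h2 : (0:ℝ) < exp (-c * (2*π)) := Real.exp_pos _
  have h0 : -c * 0 = (0:ℝ) := by ring
  rw [h0, Real.exp_zero, show ((-c)⁻¹ : ℝ) = -(c⁻¹) by rw [inv_neg], one_div]
  have h3 : (0:ℝ) < c⁻¹ := inv_pos.mpr hc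
  nlinarith

lemma refl_int (c : ℝ) :
    (∫ θ in (0:ℝ)..(2*π), exp (-c * (2*π - θ))) = ∫ θ in (0:ℝ)..(2*π), exp (-c * θ) := by
  have := integral_comp_sub_left (a := (0:ℝ)) (b := 2*π) (fun x => exp (-c * x)) (2*π)
  simpa using this

lemma L_lower {μ : ℝ} (hμ : 1 ≤ μ) :
    exp (μ - 2) / (5 * (μ * Real.sqrt μ)) ≤ L μ := by
  set m := Real.sqrt μ with hm_def
  have hμ0 : (0:ℝ) < μ := by linarith
  have hm1 : 1 ≤ m := by
    rw [hm_def, show (1:ℝ) = Real.sqrt 1 by simp]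
    exact Real.sqrt_le_sqrt hμ
  have hm0 : 0 < m := by linarith
  have hmsq : m^2 = μ := Real.sq_sqrt hμ0.le
  have hpi : 3 < π := Real.pi_gt_three
  have hord2 : (1:ℝ)/m ≤ 2/m := by gcongr; norm_num
  have hord3 : (2:ℝ)/m ≤ 2 := by
    rw [div_le_iff₀ hm0]; nlinarith
  -- split
  have hsplit : L μ = (∫ θ in (0:ℝ)..(1/m), exp (μ * cos θ) * (1 - cos θ))
      + ((∫ θ in (1/m)..(2/m), exp (μ * cos θ) * (1 - cos θ))
      + (∫ θ in (2/m)..(2*π), exp (μ * cos θ) * (1 - cos θ))) := by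
    unfold L
    rw [intervalIntegral.integral_add_adjacent_intervals (L_intgr μ _ _) (L_intgr μ _ _),
      intervalIntegral.integral_add_adjacent_intervals (L_intgr μ _ _) (L_intgr μ _ _)]
  have h1 : 0 ≤ ∫ θ in (0:ℝ)..(1/m), exp (μ * cos θ) * (1 - cos θ) :=
    L_nonneg_piece μ _ _ (by positivity)
  have h3 : 0 ≤ ∫ θ in (2/m)..(2*π), exp (μ * cos θ) * (1 - cos θ) :=
    L_nonneg_piece μ _ _ (by nlinarith)
  -- middle
  have hmid : exp (μ - 2) * (2 / (π^2 * μ)) * (2/m - 1/m)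
      ≤ ∫ θ in (1/m)..(2/m), exp (μ * cos θ) * (1 - cos θ) := by
    have := intervalIntegral.integral_mono_on (f := fun _ : ℝ => exp (μ - 2) * (2 / (π^2 * μ)))
      (g := fun θ => exp (μ * cos θ) * (1 - cos θ)) (a := 1/m) (b := 2/m) hord2
      (intervalIntegrable_const) (L_intgr μ _ _) ?_
    · rw [intervalIntegral.integral_const, smul_eq_mul] at this
      refine le_trans (le_of_eq (by ring)) this
    · intro x hx
      obtain ⟨hx1, hx2⟩ := hx
      have hx0 : 0 < x := lt_of_lt_of_le (by positivity) hx1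
      have hxπ : x ≤ π := by linarith [hord3]
      have hcosle : cos x ≤ 1 - 2 / π ^ 2 * x ^ 2 :=
        Real.cos_le_one_sub_mul_cos_sq (by rw [abs_of_pos hx0]; exact hxπ)
      have hcosge : 1 - x^2/2 ≤ cos x := Real.one_sub_sq_div_two_le_cos
      have hx2sq : x^2 ≤ 4/μ := by
        rw [← hmsq, le_div_iff₀ (by positivity : (0:ℝ) < m^2)]
        rw [le_div_iff₀ hm0] at hx2
        nlinarith [mul_pos hx0 hm0]
      have hx1sq : 1/μ ≤ x^2 := by
        rw [← hmsq, div_le_iff₀ (by positivity : (0:ℝ) < m^2)]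
        rw [div_le_iff₀ hm0] at hx1
        nlinarith [mul_pos hx0 hm0]
      have hexp : exp (μ - 2) ≤ exp (μ * cos x) := by
        apply Real.exp_le_exp.mpr
        have : 1 - 2/μ ≤ cos x := by
          have hh : x^2/2 ≤ 2/μ := by
            have h4 : (4:ℝ)/μ = 2*(2/μ) := by ring
            linarith [hx2sq]
          linarith [hcosge]
        calc μ - 2 = μ * (1 - 2/μ) := by field_simp
          _ ≤ μ * cos x := by nlinarith
      have hcos2 : 2/(π^2 * μ) ≤ 1 - cos x := by
        calc 2/(π^2*μ) = 2/π^2 * (1/μ) := by field_simp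
          _ ≤ 2/π^2 * x^2 := by
              apply mul_le_mul_of_nonneg_left hx1sq (by positivity)
          _ ≤ 1 - cos x := by linarith
      calc exp (μ - 2) * (2 / (π^2 * μ)) ≤ exp (μ * cos x) * (2/(π^2*μ)) := by
            apply mul_le_mul_of_nonneg_right hexp (by positivity)
        _ ≤ exp (μ * cos x) * (1 - cos x) := by
            apply mul_le_mul_of_nonneg_left hcos2 (Real.exp_pos _).le
  have hval : exp (μ - 2) * (2 / (π^2 * μ)) * (2/m - 1/m) = exp (μ-2) * 2/(π^2 * μ * m) := by
    field_simp
    ring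
  have hfinal : exp (μ - 2) / (5 * (μ * m)) ≤ exp (μ-2) * 2/(π^2 * μ * m) := by
    rw [div_le_div_iff₀ (by positivity) (by positivity)]
    have hπ2 : π^2 ≤ 10 := by nlinarith [Real.pi_lt_d2]
    have := Real.exp_pos (μ - 2)
    have key := mul_le_mul_of_nonneg_right hπ2
      (le_of_lt (mul_pos (mul_pos hμ0 hm0) (Real.exp_pos (μ-2))))
    nlinarith [key]
  rw [hval] at hmid
  linarith [hsplit]

lemma pt_bound {μ : ℝ} (hμ : 1 ≤ μ) {θ : ℝ} (hθ : θ ∈ Set.Icc (0:ℝ) (2*π)) :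
    μ * (exp (μ * cos θ) * (1 - cos θ)^2)
      ≤ (16 * exp (1/4) * exp μ / μ)
        * (exp (-(Real.sqrt μ/π) * θ) + exp (-(Real.sqrt μ/π) * (2*π - θ))) := by
  obtain ⟨hθ0, hθ2π⟩ := hθ
  set m := Real.sqrt μ with hm_def
  have hμ0 : (0:ℝ) < μ := by linarith
  have hm1 : 1 ≤ m := by
    rw [hm_def, show (1:ℝ) = Real.sqrt 1 by simp]
    exact Real.sqrt_le_sqrt hμ
  have hm0 : 0 < m := by linarith
  have hmsq : m^2 = μ := Real.sq_sqrt hμ0.le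
  have hπ : 3 < π := Real.pi_gt_three
  clear_value m
  set s := 1 - cos θ with hs_def
  clear_value s
  have hs0 : 0 ≤ s := by rw [hs_def]; have := Real.cos_le_one θ; linarith
  have hexpsplit : exp (μ * cos θ) = exp μ * exp (-(μ*s)) := by
    rw [← Real.exp_add]; congr 1; rw [hs_def]; ring
  -- (μ s)^2 ≤ 16 exp(μ s / 2)
  have hsq : (μ*s)^2 ≤ 16 * exp (μ*s/2) := by
    have h1 : μ*s/4 + 1 ≤ exp (μ*s/4) := Real.add_one_le_exp _
    have h2 : exp (μ*s/2) = exp (μ*s/4) * exp (μ*s/4) := by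
      rw [← Real.exp_add]; congr 1; ring
    have h3 : 0 ≤ μ * s := mul_nonneg hμ0.le hs0
    have h4 : (μ*s/4+1)^2 ≤ exp (μ*s/4) * exp (μ*s/4) := by
      have := mul_self_le_mul_self (by linarith : (0:ℝ) ≤ μ*s/4+1) h1
      nlinarith [this]
    nlinarith [h4]
  -- exp(-μ s/2) ≤ exp(1/4) * (...)
  have key3 : exp (-(μ*s)/2) ≤ exp (1/4) * (exp (-(m/π) * θ) + exp (-(m/π) * (2*π - θ))) := by
    have main : ∀ φ : ℝ, 0 ≤ φ → φ ≤ π → cos φ = cos θ →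
        exp (-(μ*s)/2) ≤ exp (1/4) * exp (-(m/π) * φ) := by
      intro φ hφ0 hφπ hφcos
      have hcos : cos φ ≤ 1 - 2/π^2 * φ^2 :=
        Real.cos_le_one_sub_mul_cos_sq (by rw [abs_of_nonneg hφ0]; exact hφπ)
      have hs_ge : 2/π^2 * φ^2 ≤ s := by rw [hs_def, ← hφcos]; linarith
      have hq : m*φ/π - 1/4 ≤ μ*φ^2/π^2 := by
        have h := sq_nonneg (m*(φ/π) - 1/2)
        have hπ0 : (0:ℝ) < π := by linarith
        have he : μ*φ^2/π^2 = (m*(φ/π))^2 := by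
          rw [← hmsq]; field_simp
        have he2 : m*φ/π = m*(φ/π) := by ring
        rw [he, he2]; nlinarith [h]
      have harg : -(μ*s)/2 ≤ 1/4 + (-(m/π) * φ) := by
        have hmul : μ * (2/π^2 * φ^2) ≤ μ * s := by
          apply mul_le_mul_of_nonneg_left hs_ge hμ0.le
        have he3 : μ * (2/π^2*φ^2) = 2 * (μ*φ^2/π^2) := by ring
        have h5 : μ * φ^2 / π^2 ≤ μ * s / 2 := by linarith
        have he4 : (1:ℝ)/4 + (-(m/π) * φ) = 1/4 - m*φ/π := by ring
        rw [he4]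
        linarith
      calc exp (-(μ*s)/2) ≤ exp (1/4 + (-(m/π) * φ)) := Real.exp_le_exp.mpr harg
        _ = exp (1/4) * exp (-(m/π)*φ) := Real.exp_add _ _
    rcases le_total θ π with hcase | hcase
    · have := main θ hθ0 hcase rfl
      nlinarith [mul_pos (Real.exp_pos ((1:ℝ)/4)) (Real.exp_pos (-(m/π) * (2*π - θ)))]
    · have := main (2*π - θ) (by linarith) (by linarith) (Real.cos_two_pi_sub θ)
      nlinarith [mul_pos (Real.exp_pos ((1:ℝ)/4)) (Real.exp_pos (-(m/π) * θ))]
  -- combine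
  have lhs_eq : μ * (exp (μ * cos θ) * s^2) = (exp μ / μ) * ((μ*s)^2 * exp (-(μ*s))) := by
    rw [hexpsplit, hs_def]
    field_simp
  have step : (μ*s)^2 * exp (-(μ*s)) ≤ 16 * exp (-(μ*s)/2) := by
    calc (μ*s)^2 * exp (-(μ*s)) ≤ (16 * exp (μ*s/2)) * exp (-(μ*s)) := by
          apply mul_le_mul_of_nonneg_right hsq (Real.exp_pos _).le
      _ = 16 * (exp (μ*s/2) * exp (-(μ*s))) := by ring
      _ = 16 * exp (-(μ*s)/2) := by rw [← Real.exp_add]; congr 1; ring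
  calc μ * (exp (μ * cos θ) * s^2)
      = (exp μ / μ) * ((μ*s)^2 * exp (-(μ*s))) := lhs_eq
    _ ≤ (exp μ / μ) * (16 * exp (-(μ*s)/2)) := by
        apply mul_le_mul_of_nonneg_left step (by positivity)
    _ ≤ (exp μ / μ) * (16 * (exp (1/4) * (exp (-(m/π) * θ) + exp (-(m/π) * (2*π - θ))))) := by
        apply mul_le_mul_of_nonneg_left ?_ (by positivity)
        apply mul_le_mul_of_nonneg_left key3 (by norm_num)
    _ = (16 * exp (1/4) * exp μ / μ) * (exp (-(m/π) * θ) + exp (-(m/π) * (2*π - θ))) := by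
        ring

lemma Q_big {μ : ℝ} (hμ : 1 ≤ μ) :
    μ * Q μ ≤ 32 * π * exp (1/4) * exp μ / (μ * Real.sqrt μ) := by
  set m := Real.sqrt μ with hm_def
  have hμ0 : (0:ℝ) < μ := by linarith
  have hm1 : 1 ≤ m := by
    rw [hm_def, show (1:ℝ) = Real.sqrt 1 by simp]
    exact Real.sqrt_le_sqrt hμ
  have hm0 : 0 < m := by linarith
  have hπ : 3 < π := Real.pi_gt_three
  have hc0 : 0 < m/π := by positivity
  set K := 16 * exp (1/4) * exp μ / μ with hK_def
  have hK0 : 0 < K := by rw [hK_def]; positivity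
  have h1 : μ * Q μ = ∫ θ in (0:ℝ)..(2*π), μ * (exp (μ * cos θ) * (1 - cos θ)^2) := by
    unfold Q; rw [intervalIntegral.integral_const_mul]
  have h2 : (∫ θ in (0:ℝ)..(2*π), μ * (exp (μ * cos θ) * (1 - cos θ)^2))
      ≤ ∫ θ in (0:ℝ)..(2*π), K * (exp (-(m/π) * θ) + exp (-(m/π) * (2*π - θ))) := by
    apply intervalIntegral.integral_mono_on (by positivity)
    · exact (by fun_prop : Continuous _).intervalIntegrable _ _
    · exact (by fun_prop : Continuous _).intervalIntegrable _ _
    · intro x hx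
      exact pt_bound hμ hx
  have h3 : (∫ θ in (0:ℝ)..(2*π), K * (exp (-(m/π) * θ) + exp (-(m/π) * (2*π - θ))))
      = K * ((∫ θ in (0:ℝ)..(2*π), exp (-(m/π) * θ))
          + (∫ θ in (0:ℝ)..(2*π), exp (-(m/π) * (2*π - θ)))) := by
    rw [intervalIntegral.integral_const_mul, intervalIntegral.integral_add]
    · exact (by fun_prop : Continuous _).intervalIntegrable _ _
    · exact (by fun_prop : Continuous _).intervalIntegrable _ _
  have h4 : (∫ θ in (0:ℝ)..(2*π), exp (-(m/π) * θ)) ≤ π/m := by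
    have := exp_int_bound hc0
    rwa [one_div_div] at this
  have h5 : (∫ θ in (0:ℝ)..(2*π), exp (-(m/π) * (2*π - θ))) ≤ π/m := by
    rw [refl_int]; exact h4
  have h6 : K * ((∫ θ in (0:ℝ)..(2*π), exp (-(m/π) * θ))
      + (∫ θ in (0:ℝ)..(2*π), exp (-(m/π) * (2*π - θ)))) ≤ K * (π/m + π/m) := by
    apply mul_le_mul_of_nonneg_left (by linarith) hK0.le
  have h7 : K * (π/m + π/m) = 32 * π * exp (1/4) * exp μ / (μ * m) := by
    rw [hK_def]; field_simp; ring
  linarith [h1, h2, h3 ▸ h2, h6, h7]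

lemma ratio_bound {μ : ℝ} (hμ : 0 ≤ μ) : μ * Q μ ≤ 11000 * L μ := by
  rcases le_or_gt μ 1 with hcase | hcase
  · have h1 : μ * Q μ ≤ 1 * Q μ := mul_le_mul_of_nonneg_right hcase (Q_nonneg μ)
    have h2 := Q_le_two_L μ
    have h3 := L_pos μ
    nlinarith
  · have hμ1 : 1 ≤ μ := hcase.le
    have h1 := Q_big hμ1
    have h2 := L_lower hμ1
    set m := Real.sqrt μ with hm_def
    have hμ0 : (0:ℝ) < μ := by linarith
    have hm0 : 0 < m := Real.sqrt_pos.mpr hμ0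
    have hμm : 0 < μ * m := mul_pos hμ0 hm0
    have hnum : 32*π*(exp (1/4) * exp 2) ≤ 2200 := by
      have he : exp 1 < 2.7182818286 := Real.exp_one_lt_d9
      have he0 : (0:ℝ) < exp 1 := Real.exp_pos 1
      have h14 : exp (1/4:ℝ) ≤ exp 1 := Real.exp_le_exp.mpr (by norm_num)
      have h22 : exp (2:ℝ) = exp 1 * exp 1 := by rw [← Real.exp_add]; norm_num
      have hπ' : π < 3.15 := by
        have := Real.pi_lt_d2
        linarith
      have hπ0 : (0:ℝ) < π := Real.pi_pos
      have he14 : (0:ℝ) < exp (1/4:ℝ) := Real.exp_pos _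
      nlinarith [mul_pos he14 (Real.exp_pos (2:ℝ))]
    have hsplitexp : exp μ = exp (μ - 2) * exp 2 := by
      rw [← Real.exp_add]; norm_num
    have heq : 32 * π * exp (1/4) * exp μ / (μ * m)
        = (32*π*(exp (1/4) * exp 2)) * (exp (μ-2) / (μ*m)) := by
      rw [hsplitexp]; field_simp
    have heq2 : 11000 * (exp (μ-2) / (5*(μ*m))) = 2200 * (exp (μ-2)/(μ*m)) := by
      field_simp; ring
    have hpos : 0 < exp (μ-2)/(μ*m) := by positivity
    have h3 : 32 * π * exp (1/4) * exp μ / (μ * m) ≤ 11000 * (exp (μ-2) / (5*(μ*m))) := by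
      rw [heq, heq2]
      exact mul_le_mul_of_nonneg_right hnum hpos.le
    have h4 : 11000 * (exp (μ-2) / (5*(μ*m))) ≤ 11000 * L μ :=
      mul_le_mul_of_nonneg_left h2 (by norm_num)
    linarith

lemma E_bound_nonneg {μ : ℝ} (hμ : 0 ≤ μ) :
    |2 * μ + besselI 0 μ / (besselI 0 μ + besselI 1 μ)
      - besselI 0 μ / (besselI 0 μ - besselI 1 μ)| ≤ 11001 := by
  have hπ0 : (0:ℝ) < π := Real.pi_pos
  have hT : (0:ℝ) < 1/(2*π) := by positivity
  have hA := A_pos μ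
  have hL := L_pos μ
  have hLAB := hL_eq μ
  have hBeq := B_eq μ
  have hQ2L := Q_le_two_L μ
  have hB0 : 0 ≤ B μ := by
    rw [hBeq]; exact mul_nonneg hμ (by linarith)
  have hAB : 0 < A μ + B μ := by linarith
  have e1 : besselI 0 μ / (besselI 0 μ + besselI 1 μ) = A μ / (A μ + B μ) := by
    rw [besselI0_eq, besselI1_eq, ← mul_add, mul_div_mul_left _ _ (ne_of_gt hT)]
  have e2 : besselI 0 μ / (besselI 0 μ - besselI 1 μ) = A μ / L μ := by
    rw [besselI0_eq, besselI1_eq, ← mul_sub, mul_div_mul_left _ _ (ne_of_gt hT), ← hLAB]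
  have hAoverL : A μ / L μ = 1 + 2*μ - μ * Q μ / L μ := by
    have hA_eq : A μ = L μ + μ*(2*L μ - Q μ) := by linarith
    rw [hA_eq]
    field_simp
    ring
  have hfrac_le : A μ / (A μ + B μ) ≤ 1 := by
    rw [div_le_one hAB]; linarith
  have hfrac_pos : 0 < A μ / (A μ + B μ) := by positivity
  have hratio_le : μ * Q μ / L μ ≤ 11000 := by
    rw [div_le_iff₀ hL]
    linarith [ratio_bound hμ]
  have hratio_ge : 0 ≤ μ * Q μ / L μ :=
    div_nonneg (mul_nonneg hμ (Q_nonneg μ)) hL.le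
  rw [e1, e2, hAoverL, abs_le]
  constructor <;> nlinarith

lemma besselI0_neg (μ : ℝ) : besselI 0 (-μ) = besselI 0 μ := by
  rw [besselI0_eq, besselI0_eq, A_neg]

lemma besselI1_neg (μ : ℝ) : besselI 1 (-μ) = - besselI 1 μ := by
  rw [besselI1_eq, besselI1_eq, B_neg]; ring

end BesselAux

/-- The quantity `2μ + I₀/(I₀+I₁) − I₀/(I₀−I₁)` (the derivative in `q` of the
correction term `ΔS = S − Ŝ` of the 2D entropy decomposition, expressed in the
variable `μ`) is uniformly bounded over `μ ∈ ℝ`. -/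
theorem deriv_correction_2d_uniformly_bounded :
    ∃ C : ℝ, 0 < C ∧ ∀ μ : ℝ,
      |2 * μ + besselI 0 μ / (besselI 0 μ + besselI 1 μ)
        - besselI 0 μ / (besselI 0 μ - besselI 1 μ)| ≤ C := by
  refine ⟨11001, by norm_num, fun μ => ?_⟩
  rcases le_or_gt 0 μ with hμ | hμ
  · exact BesselAux.E_bound_nonneg hμ
  · have hν : (0:ℝ) ≤ -μ := by linarith
    have h := BesselAux.E_bound_nonneg hν
    have h0 : besselI 0 μ = besselI 0 (-μ) := by
      rw [BesselAux.besselI0_neg]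
    have h1 : besselI 1 μ = - besselI 1 (-μ) := by
      have := BesselAux.besselI1_neg (-μ)
      rw [neg_neg] at this
      linarith
    have hEq : 2 * μ + besselI 0 μ / (besselI 0 μ + besselI 1 μ)
        - besselI 0 μ / (besselI 0 μ - besselI 1 μ)
        = -(2 * (-μ) + besselI 0 (-μ) / (besselI 0 (-μ) + besselI 1 (-μ))
          - besselI 0 (-μ) / (besselI 0 (-μ) - besselI 1 (-μ))) := by
      rw [h0, h1]
      ring
    rw [hEq, abs_neg]
    exact h
end

section
/- Define q̃(μ) = I₁(μ)/(2 I₀(μ)) and ΔS̃(μ) = 2μ q̃(μ) − ln I₀(μ) + (1/2) ln((1/2 + q̃(μ))(1/2 − q̃(μ))) for μ ∈ ℝ. Then there exists a constant C > 0 such that for all μ₁, μ₂ ∈ ℝ, |ΔS̃(μ₁) − ΔS̃(μ₂)| ≤ C |q̃(μ₁) − q̃(μ₂)|. (This is the Lipschitz continuity of the correction term in the two-dimensional entropy decomposition S(q) = −(1/2)ln((1/2+q)(1/2−q)) + ΔS(q).) -/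
open Real Filter

/-- `q̃(μ) = I₁(μ)/(2 I₀(μ))`, the 2D order parameter of the Bingham distribution. -/
noncomputable def qTilde (μ : ℝ) : ℝ := besselI 1 μ / (2 * besselI 0 μ)

/-- The 2D entropy correction term, expressed in the variable `μ`:
`ΔS̃(μ) = 2μ q̃(μ) − ln I₀(μ) + (1/2) ln((1/2 + q̃(μ))(1/2 − q̃(μ)))`. -/
noncomputable def deltaS2d (μ : ℝ) : ℝ :=
  2 * μ * qTilde μ - Real.log (besselI 0 μ)
    + (1/2) * Real.log ((1/2 + qTilde μ) * (1/2 - qTilde μ))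


namespace Corr2d
open MeasureTheory Set intervalIntegral

lemma tpp : (0:ℝ) < 2 * π := by positivity

noncomputable def mom (w : ℝ → ℝ) (μ : ℝ) : ℝ :=
  ∫ θ in (0:ℝ)..(2*π), w θ * Real.exp (μ * Real.cos θ)

lemma contI {w : ℝ → ℝ} (hw : Continuous w) (μ a b : ℝ) :
    IntervalIntegrable (fun θ => w θ * Real.exp (μ * Real.cos θ)) volume a b :=
  (hw.mul (Real.continuous_exp.comp (continuous_const.mul Real.continuous_cos))).intervalIntegrable a b

lemma mom_hasDerivAt {w : ℝ → ℝ} (hw : Continuous w) (hwb : ∀ θ, |w θ| ≤ 1) (μ : ℝ) :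
    HasDerivAt (mom w) (mom (fun θ => w θ * Real.cos θ) μ) μ := by
  have key := intervalIntegral.hasDerivAt_integral_of_dominated_loc_of_deriv_le
    (F := fun x t => w t * Real.exp (x * Real.cos t))
    (F' := fun x t => (w t * Real.cos t) * Real.exp (x * Real.cos t))
    (x₀ := μ) (a := (0:ℝ)) (b := 2*π) (μ := volume)
    (bound := fun _ => Real.exp (|μ| + 1))
    (s := Metric.ball μ 1) (Metric.ball_mem_nhds μ one_pos)
    (Eventually.of_forall fun x => ((contI hw x 0 (2*π)).def' ).aestronglyMeasurable.congr ?_)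
    (contI hw μ 0 (2*π))
    ((contI (hw.mul Real.continuous_cos) μ 0 (2*π)).def'.aestronglyMeasurable.congr ?_)
    (ae_of_all _ fun t _ x hx => ?_)
    intervalIntegrable_const
    (ae_of_all _ fun t _ x _ => ?_)
  · exact key.2
  · rfl
  · rfl
  · -- bound
    have hxb : |x| ≤ |μ| 
      + 1 := by
      have := mem_ball_iff_norm.mp hx
      have : |x - μ| < 1 := this
      calc |x| = |μ + (x - μ)| := by ring_nf
        _ ≤ |μ| + |x - μ| := abs_add_le _ _
        _ ≤ |μ| + 1 := by linarith
    have h1 : x * Real.cos t ≤ |μ| + 1 := by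
      calc x * Real.cos t ≤ |x * Real.cos t| := le_abs_self _
        _ = |x| * |Real.cos t| := abs_mul _ _
        _ ≤ (|μ| + 1) * 1 := by
            apply mul_le_mul hxb (Real.abs_cos_le_one t) (abs_nonneg _) (by positivity)
        _ = |μ| + 1 := mul_one _
    have : ‖w t * Real.cos t * Real.exp (x * Real.cos t)‖
        = |w t * Real.cos t| * Real.exp (x * Real.cos t) := by
      rw [norm_mul]; rw [Real.norm_eq_abs, Real.norm_eq_abs, Real.abs_exp]
    rw [this]
    calc |w t * Real.cos t| * Real.exp (x * Real.cos t)
        ≤ 1 * Real.exp (|μ| + 1) := by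
          apply mul_le_mul _ (Real.exp_le_exp.mpr h1) (Real.exp_pos _).le zero_le_one
          rw [abs_mul]
          exact mul_le_one₀ (hwb t) (abs_nonneg _) (Real.abs_cos_le_one t)
      _ = Real.exp (|μ| + 1) := one_mul _
  · -- differentiability
    have h : HasDerivAt (fun x : ℝ => x * Real.cos t) (Real.cos t) x := by
      simpa using (hasDerivAt_id x).mul_const (Real.cos t)
    have := (h.exp).const_mul (w t)
    refine this.congr_deriv ?_
    ring

noncomputable def m0 (μ : ℝ) : ℝ := mom (fun _ => 1) μ
noncomputable def m1 (μ : ℝ) : ℝ := mom Real.cos μ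
noncomputable def m2 (μ : ℝ) : ℝ := mom (fun θ => Real.cos θ ^ 2) μ

lemma m0_pos (μ : ℝ) : 0 < m0 μ := by
  apply intervalIntegral_pos_of_pos (contI continuous_const μ 0 (2*π)) _ tpp
  intro x; positivity

lemma m2_le_m0 (μ : ℝ) : m2 μ ≤ m0 μ := by
  apply integral_mono_on tpp.le
    (contI (Real.continuous_cos.pow 2) μ 0 (2*π)) (contI continuous_const μ 0 (2*π))
  intro x _
  have h1 : Real.cos x ^ 2 ≤ 1 := Real.cos_sq_le_one x
  simp only [Pi.pow_apply]
  nlinarith [Real.exp_pos (μ * Real.cos x)]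

lemma m2_nonneg (μ : ℝ) : 0 ≤ m2 μ := by
  apply integral_nonneg tpp.le
  intro x _; positivity


lemma besselI_zero_eq (μ : ℝ) : besselI 0 μ = (1/(2*π)) * m0 μ := by
  unfold besselI m0 mom
  congr 1
  apply intervalIntegral.integral_congr
  intro θ _
  simp [mul_comm]

lemma besselI_one_eq (μ : ℝ) : besselI 1 μ = (1/(2*π)) * m1 μ := by
  unfold besselI m1 mom
  congr 1
  apply intervalIntegral.integral_congr
  intro θ _
  simp [mul_comm]

/-- integration by parts identity: `m1 μ = μ * (m0 μ - m2 μ)` -/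
lemma m1_eq (μ : ℝ) : m1 μ = μ * (m0 μ - m2 μ) := by
  have hu : ∀ x ∈ Set.uIcc (0:ℝ) (2*π), HasDerivAt Real.sin (Real.cos x) x :=
    fun x _ => Real.hasDerivAt_sin x
  have hv : ∀ x ∈ Set.uIcc (0:ℝ) (2*π),
      HasDerivAt (fun θ => Real.exp (μ * Real.cos θ))
        (-(μ * Real.sin x) * Real.exp (μ * Real.cos x)) x := by
    intro x _
    have h : HasDerivAt (fun θ : ℝ => μ * Real.cos θ) (-(μ * Real.sin x)) x := by
      simpa [mul_comm, neg_mul, mul_neg] using (Real.hasDerivAt_cos x).const_mul μ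
    simpa [mul_comm] using h.exp
  have hIBP := intervalIntegral.integral_mul_deriv_eq_deriv_mul hu hv
    (Real.continuous_cos.intervalIntegrable 0 (2*π))
    (((continuous_const.mul Real.continuous_sin).neg.mul
      (Real.continuous_exp.comp (continuous_const.mul Real.continuous_cos))).intervalIntegrable 0 (2*π))
  -- hIBP : ∫ sin x * (-(μ sin x) * exp) = sin(2π)*e - sin 0*e - ∫ cos x * exp
  have hsin2pi : Real.sin (2*π) = 0 := by simp [Real.sin_two_pi]
  have hL : (∫ x in (0:ℝ)..(2*π), Real.sin x * (-(μ * Real.sin x) * Real.exp (μ * Real.cos x)))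
      = -μ * ∫ x in (0:ℝ)..(2*π), Real.sin x ^ 2 * Real.exp (μ * Real.cos x) := by
    rw [← intervalIntegral.integral_const_mul]
    apply intervalIntegral.integral_congr
    intro θ _; ring
  have hsq : (∫ x in (0:ℝ)..(2*π), Real.sin x ^ 2 * Real.exp (μ * Real.cos x))
      = m0 μ - m2 μ := by
    unfold m0 m2 mom
    rw [← intervalIntegral.integral_sub (contI continuous_const μ 0 (2*π))
      (contI (w := fun θ => Real.cos θ ^ 2) (Real.continuous_cos.pow 2) μ 0 (2*π))]
    apply intervalIntegral.integral_congr
    intro θ _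
    have := Real.sin_sq_add_cos_sq θ
    ring_nf
    nlinarith [Real.exp_pos (μ * Real.cos θ)]
  rw [hL, hsq, hsin2pi] at hIBP
  have : m1 μ = ∫ x in (0:ℝ)..(2*π), Real.cos x * Real.exp (μ * Real.cos x) := rfl
  rw [this]
  simp at hIBP
  linarith

lemma m1_nonneg {μ : ℝ} (hμ : 0 ≤ μ) : 0 ≤ m1 μ := by
  rw [m1_eq]
  have := m2_le_m0 μ
  nlinarith

/-- Cauchy-Schwarz: `m1² ≤ m0 * m2` -/
lemma cs (μ : ℝ) : m1 μ ^ 2 ≤ m0 μ * m2 μ := by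
  have h0 : 0 ≤ ∫ θ in (0:ℝ)..(2*π),
      (m0 μ * Real.cos θ - m1 μ)^2 * Real.exp (μ * Real.cos θ) := by
    apply integral_nonneg tpp.le
    intro x _; positivity
  have hexp : (∫ θ in (0:ℝ)..(2*π), (m0 μ * Real.cos θ - m1 μ)^2 * Real.exp (μ * Real.cos θ))
      = m0 μ ^2 * m2 μ - 2 * m0 μ * m1 μ * m1 μ + m1 μ ^2 * m0 μ := by
    have : ∀ θ : ℝ, (m0 μ * Real.cos θ - m1 μ)^2 * Real.exp (μ * Real.cos θ)
        = m0 μ ^2 * (Real.cos θ ^2 * Real.exp (μ * Real.cos θ))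
          - 2 * m0 μ * m1 μ * (Real.cos θ * Real.exp (μ * Real.cos θ))
          + m1 μ ^2 * (1 * Real.exp (μ * Real.cos θ)) := by
      intro θ; ring
    rw [intervalIntegral.integral_congr (fun θ _ => this θ)]
    rw [intervalIntegral.integral_add, intervalIntegral.integral_sub,
      intervalIntegral.integral_const_mul, intervalIntegral.integral_const_mul,
      intervalIntegral.integral_const_mul]
    · rfl
    · exact (contI (Real.continuous_cos.pow 2) μ 0 (2*π)).const_mul _
    · exact (contI Real.continuous_cos μ 0 (2*π)).const_mul _
    · exact ((contI (Real.continuous_cos.pow 2) μ 0 (2*π)).const_mul _).sub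
        ((contI Real.continuous_cos μ 0 (2*π)).const_mul _)
    · exact (contI continuous_const μ 0 (2*π)).const_mul _
  rw [hexp] at h0
  have hp := m0_pos μ
  nlinarith

/-- positivity of `m0 - m1` -/
lemma m0_sub_m1_pos (μ : ℝ) : 0 < m0 μ - m1 μ := by
  have heq : m0 μ - m1 μ = ∫ θ in (0:ℝ)..(2*π),
      (1 - Real.cos θ) * Real.exp (μ * Real.cos θ) := by
    unfold m0 m1 mom
    rw [← intervalIntegral.integral_sub (contI continuous_const μ 0 (2*π))
      (contI Real.continuous_cos μ 0 (2*π))]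
    apply intervalIntegral.integral_congr; intro θ _; ring
  rw [heq]
  apply intervalIntegral_pos_of_pos_on
    (contI (continuous_const.sub Real.continuous_cos) μ 0 (2*π))
    _ tpp
  intro x hx
  have hcos : Real.cos x < 1 := by
    by_contra h
    push_neg at h
    have : Real.cos x = 1 := le_antisymm (Real.cos_le_one x) h
    rw [Real.cos_eq_one_iff_of_lt_of_lt (by linarith [hx.1, hx.2]) (by linarith [hx.2])] at this
    · exact absurd this (ne_of_gt hx.1)
  have := Real.exp_pos (μ * Real.cos x)
  simp only [Pi.sub_apply]
  nlinarith

lemma sub_le {f : ℝ → ℝ} {a b c d : ℝ} (hf : IntervalIntegrable f volume a b)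
    (h0 : ∀ x, 0 ≤ f x) (hac : a ≤ c) (hcd : c ≤ d) (hdb : d ≤ b) :
    ∫ x in c..d, f x ≤ ∫ x in a..b, f x := by
  have h1 : IntervalIntegrable f volume a c :=
    hf.mono_set (by rw [Set.uIcc_of_le hac, Set.uIcc_of_le (hac.trans (hcd.trans hdb))]; exact Set.Icc_subset_Icc le_rfl (hcd.trans hdb))
  have h2 : IntervalIntegrable f volume c d :=
    hf.mono_set (by rw [Set.uIcc_of_le hcd, Set.uIcc_of_le (hac.trans (hcd.trans hdb))]; exact Set.Icc_subset_Icc hac hdb)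
  have h3 : IntervalIntegrable f volume d b :=
    hf.mono_set (by rw [Set.uIcc_of_le hdb, Set.uIcc_of_le (hac.trans (hcd.trans hdb))]; exact Set.Icc_subset_Icc (hac.trans hcd) le_rfl)
  have e1 : ∫ x in a..b, f x = (∫ x in a..c, f x) + (∫ x in c..d, f x) + ∫ x in d..b, f x := by
    rw [integral_add_adjacent_intervals h1 h2, integral_add_adjacent_intervals (h1.trans h2) h3]
  have n1 : 0 ≤ ∫ x in a..c, f x := integral_nonneg hac fun x _ => h0 x
  have n3 : 0 ≤ ∫ x in d..b, f x := integral_nonneg hdb fun x _ => h0 x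
  linarith

lemma const_le {f : ℝ → ℝ} {a b m : ℝ} (hab : a ≤ b) (hf : IntervalIntegrable f volume a b)
    (hm : ∀ x ∈ Set.Icc a b, m ≤ f x) :
    (b - a) * m ≤ ∫ x in a..b, f x := by
  have := integral_mono_on hab (_root_.intervalIntegrable_const (c := m)) hf hm
  simpa using this

/-- positivity of `m0 + m1` -/
lemma m0_add_m1_pos (μ : ℝ) : 0 < m0 μ + m1 μ := by
  have heq : m0 μ + m1 μ = ∫ θ in (0:ℝ)..(2*π),
      (1 + Real.cos θ) * Real.exp (μ * Real.cos θ) := by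
    unfold m0 m1 mom
    rw [← intervalIntegral.integral_add (contI continuous_const μ 0 (2*π))
      (contI Real.continuous_cos μ 0 (2*π))]
    apply intervalIntegral.integral_congr; intro θ _; ring
  rw [heq]
  have hpos : 0 < ∫ θ in (0:ℝ)..(π/2), (1 + Real.cos θ) * Real.exp (μ * Real.cos θ) := by
    apply intervalIntegral_pos_of_pos_on
      (contI (continuous_const.add Real.continuous_cos) μ 0 (π/2)) _ (by positivity)
    intro x hx
    have : 0 ≤ Real.cos x := Real.cos_nonneg_of_mem_Icc
      ⟨by linarith [hx.1, Real.pi_pos], hx.2.le⟩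
    have := Real.exp_pos (μ * Real.cos x)
    simp only [Pi.add_apply]
    nlinarith
  refine lt_of_lt_of_le hpos (sub_le (contI (continuous_const.add Real.continuous_cos) μ 0 (2*π)) ?_ le_rfl (by positivity) (by linarith [Real.pi_pos]))
  intro x
  have h1 : -1 ≤ Real.cos x := Real.neg_one_le_cos x
  have := Real.exp_pos (μ * Real.cos x)
  nlinarith

/-- shift a 2π-periodic moment integral to [−π, π] -/
lemma mom_shift {w : ℝ → ℝ} (hw : Function.Periodic w (2*π)) (μ : ℝ) :
    mom w μ = ∫ θ in (-π)..π, w θ * Real.exp (μ * Real.cos θ) := by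
  have hper : Function.Periodic (fun θ => w θ * Real.exp (μ * Real.cos θ)) (2*π) := by
    intro x
    simp [hw x, Real.cos_add_two_pi]
  have := hper.intervalIntegral_add_eq 0 (-π)
  simp only [zero_add] at this
  rw [show -π + 2*π = π by ring] at this
  rw [mom, this]

/-- Gaussian tail comparison -/
lemma gauss_le {b : ℝ} (hb : 0 < b) :
    ∫ θ in (-π)..π, Real.exp (-b * θ^2) ≤ Real.sqrt (π / b) := by
  rw [intervalIntegral.integral_of_le (by linarith [Real.pi_pos])]
  rw [← integral_gaussian b]
  apply setIntegral_le_integral (integrable_exp_neg_mul_sq hb)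
  filter_upwards with x
  positivity

/-- pointwise upper bound for the E-integrand, μ ≥ 1 -/
lemma ptE {μ θ : ℝ} (hμ : 1 ≤ μ) (hθ : |θ| ≤ π) :
    (1 - Real.cos θ)^2 * Real.exp (μ * Real.cos θ)
      ≤ (Real.exp μ * (π^4/μ^2)) * Real.exp (-(μ/π^2) * θ^2) := by
  have hμ0 : (0:ℝ) < μ := by linarith
  have h1 : 1 - Real.cos θ ≤ θ^2/2 := by
    have := Real.one_sub_sq_div_two_le_cos (x := θ); linarith
  have h1' : 0 ≤ 1 - Real.cos θ := by linarith [Real.cos_le_one θ]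
  have h2 : (1 - Real.cos θ)^2 ≤ θ^4/4 := by nlinarith
  have h3 : Real.cos θ ≤ 1 - 2/π^2 * θ^2 := Real.cos_le_one_sub_mul_cos_sq hθ
  have h4 : Real.exp (μ * Real.cos θ)
      ≤ Real.exp μ * Real.exp (-(μ/π^2) * θ^2) * Real.exp (-(μ/π^2) * θ^2) := by
    rw [← Real.exp_add, ← Real.exp_add]
    apply Real.exp_le_exp.mpr
    have := mul_le_mul_of_nonneg_left h3 hμ0.le
    have hπ := Real.pi_pos
    have : μ * (1 - 2/π^2*θ^2) = μ + -(μ/π^2) * θ^2 + -(μ/π^2)*θ^2 := by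
      field_simp; ring
    nlinarith [mul_le_mul_of_nonneg_left h3 hμ0.le]
  have h5 : θ^4/4 * Real.exp (-(μ/π^2) * θ^2) ≤ π^4/μ^2 := by
    set s : ℝ := μ/π^2 * θ^2 with hs
    have hπ := Real.pi_pos
    have hs0 : 0 ≤ s := by positivity
    have he : s/2 + 1 ≤ Real.exp (s/2) := by
      have := Real.add_one_le_exp (s/2); linarith
    have hsq : s^2/4 ≤ Real.exp s := by
      have h := Real.exp_pos (s/2)
      have : Real.exp (s/2) * Real.exp (s/2) = Real.exp s := by
        rw [← Real.exp_add]; ring_nf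
      nlinarith
    -- θ^4 = s^2 * π^4 / μ^2
    have hθ4 : θ^4 = s^2 * π^4 / μ^2 := by
      rw [hs]; field_simp
    have hen : Real.exp (-(μ/π^2) * θ^2) = (Real.exp s)⁻¹ := by
      rw [← Real.exp_neg]; congr 1; rw [hs]; ring
    rw [hθ4, hen]
    have hE := Real.exp_pos s
    have key : s^2/4 * (Real.exp s)⁻¹ ≤ 1 := by
      have := mul_le_mul_of_nonneg_right hsq (inv_nonneg.mpr hE.le)
      rwa [mul_inv_cancel₀ hE.ne'] at this
    calc s^2*π^4/μ^2/4 * (Real.exp s)⁻¹ = (s^2/4*(Real.exp s)⁻¹) * (π^4/μ^2) := by ring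
      _ ≤ 1 * (π^4/μ^2) := mul_le_mul_of_nonneg_right key (by positivity)
      _ = π^4/μ^2 := one_mul _
  calc (1 - Real.cos θ)^2 * Real.exp (μ * Real.cos θ)
      ≤ (θ^4/4) * (Real.exp μ * Real.exp (-(μ/π^2) * θ^2) * Real.exp (-(μ/π^2) * θ^2)) := by
        apply mul_le_mul h2 h4 (Real.exp_pos _).le (by positivity)
    _ = (θ^4/4 * Real.exp (-(μ/π^2) * θ^2)) * Real.exp μ * Real.exp (-(μ/π^2) * θ^2) := by ring
    _ ≤ (π^4/μ^2) * Real.exp μ * Real.exp (-(μ/π^2) * θ^2) := by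
        apply mul_le_mul_of_nonneg_right (mul_le_mul_of_nonneg_right h5 (Real.exp_pos _).le) (Real.exp_pos _).le
    _ = (Real.exp μ * (π^4/μ^2)) * Real.exp (-(μ/π^2) * θ^2) := by ring


noncomputable def Em (μ : ℝ) : ℝ := mom (fun θ => (1 - Real.cos θ)^2) μ
noncomputable def Dm (μ : ℝ) : ℝ := mom (fun θ => 1 - Real.cos θ) μ

lemma Em_le {μ : ℝ} (hμ : 1 ≤ μ) :
    Em μ ≤ Real.exp μ * (π^4/μ^2) * Real.sqrt (π/(μ/π^2)) := by
  have hμ0 : (0:ℝ) < μ := by linarith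
  have hb : (0:ℝ) < μ/π^2 := by positivity
  have hper : Function.Periodic (fun θ => (1 - Real.cos θ)^2) (2*π) := by
    intro x; simp [Real.cos_add_two_pi]
  rw [Em, mom_shift hper]
  calc (∫ θ in (-π)..π, (1-Real.cos θ)^2 * Real.exp (μ*Real.cos θ))
      ≤ ∫ θ in (-π)..π, (Real.exp μ * (π^4/μ^2)) * Real.exp (-(μ/π^2) * θ^2) := by
        apply integral_mono_on (by linarith [Real.pi_pos])
          (contI ((continuous_const.sub Real.continuous_cos).pow 2) μ (-π) π)
          ((continuous_const.mul (Real.continuous_exp.comp ((continuous_const.mul (continuous_pow 2))))).intervalIntegrable _ _)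
        intro θ hθ
        exact ptE hμ (abs_le.mpr ⟨by linarith [hθ.1], hθ.2⟩)
    _ = (Real.exp μ * (π^4/μ^2)) * ∫ θ in (-π)..π, Real.exp (-(μ/π^2) * θ^2) := by
        rw [intervalIntegral.integral_const_mul]
    _ ≤ (Real.exp μ * (π^4/μ^2)) * Real.sqrt (π/(μ/π^2)) := by
        apply mul_le_mul_of_nonneg_left (gauss_le hb) (by positivity)

lemma exp_half_lt_two : Real.exp (1/2 : ℝ) < 2 := by
  have h1 : Real.exp (1/2 : ℝ) * Real.exp (1/2 : ℝ) = Real.exp 1 := by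
    rw [← Real.exp_add]; norm_num
  have h2 := Real.exp_one_lt_d9
  have h3 := Real.exp_pos (1/2 : ℝ)
  nlinarith

lemma Dm_ge {μ : ℝ} (hμ : 1 ≤ μ) :
    Real.exp μ / (8*π^2*μ*Real.sqrt μ) ≤ Dm μ := by
  have hμ0 : (0:ℝ) < μ := by linarith
  have hs0 : 0 < Real.sqrt μ := Real.sqrt_pos.mpr hμ0
  have hs1 : 1 ≤ Real.sqrt μ := by
    rw [show (1:ℝ) = Real.sqrt 1 by simp]
    exact Real.sqrt_le_sqrt hμ
  have hssq : Real.sqrt μ ^ 2 = μ := Real.sq_sqrt hμ0.le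
  have hπ3 := Real.pi_gt_three
  set a : ℝ := 1/(2*Real.sqrt μ) with ha
  set b : ℝ := 1/Real.sqrt μ with hb
  have hab : a < b := by
    rw [ha, hb]
    rw [div_lt_div_iff₀ (by positivity) (by positivity)]
    nlinarith
  have hb1 : b ≤ 1 := by rw [hb]; rw [div_le_one hs0]; exact hs1
  have ha0 : 0 < a := by positivity
  have hper : Function.Periodic (fun θ => 1 - Real.cos θ) (2*π) := by
    intro x; simp [Real.cos_add_two_pi]
  rw [Dm, mom_shift hper]
  have hnn : ∀ x : ℝ, 0 ≤ (1 - Real.cos x) * Real.exp (μ * Real.cos x) := by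
    intro x
    have := Real.cos_le_one x
    have := Real.exp_pos (μ * Real.cos x)
    nlinarith
  have hpt : ∀ x ∈ Set.Icc a b,
      Real.exp μ / (4*π^2*μ) ≤ (1 - Real.cos x) * Real.exp (μ * Real.cos x) := by
    intro x hx
    have hx0 : 0 < x := lt_of_lt_of_le ha0 hx.1
    have hx1 : x ≤ 1 := le_trans hx.2 hb1
    have hxa2 : a^2 ≤ x^2 := by nlinarith [hx.1]
    have ha2 : a^2 = 1/(4*μ) := by rw [ha]; field_simp; nlinarith [hssq]
    have hcub : 1 - Real.cos x ≥ 1/(2*π^2*μ) := by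
      have h3 : Real.cos x ≤ 1 - 2/π^2 * x^2 :=
        Real.cos_le_one_sub_mul_cos_sq (by rw [abs_of_pos hx0]; linarith)
      have : 2/π^2 * x^2 ≥ 2/π^2 * (1/(4*μ)) := by
        apply mul_le_mul_of_nonneg_left _ (by positivity)
        rw [← ha2]; exact hxa2
      have heq : 2/π^2 * (1/(4*μ)) = 1/(2*π^2*μ) := by field_simp; ring
      linarith [heq ▸ this]
    have hexp : Real.exp (μ * Real.cos x) ≥ Real.exp μ / 2 := by
      have hc : Real.cos x ≥ 1 - x^2/2 := Real.one_sub_sq_div_two_le_cos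
      have hx2 : x^2 ≤ b^2 := by nlinarith [hx.2]
      have hb2 : b^2 = 1/μ := by rw [hb]; field_simp; exact hssq.symm
      have : μ * Real.cos x ≥ μ - 1/2 := by
        have : μ * Real.cos x ≥ μ * (1 - x^2/2) := by
          apply mul_le_mul_of_nonneg_left _ hμ0.le; linarith
        have h2 : μ * (1 - x^2/2) ≥ μ * (1 - (1/μ)/2) := by
          apply mul_le_mul_of_nonneg_left _ hμ0.le
          rw [← hb2]; nlinarith
        have h3 : μ * (1 - (1/μ)/2) = μ - 1/2 := by field_simp
        linarith
      calc Real.exp (μ * Real.cos x) ≥ Real.exp (μ - 1/2) := Real.exp_le_exp.mpr this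
        _ = Real.exp μ * (Real.exp (1/2:ℝ))⁻¹ := by
            rw [← Real.exp_neg, ← Real.exp_add]; ring_nf
        _ ≥ Real.exp μ / 2 := by
            have h2 := exp_half_lt_two
            have h3 := Real.exp_pos (1/2:ℝ)
            have hinv : (Real.exp (1/2:ℝ))⁻¹ * Real.exp (1/2:ℝ) = 1 := inv_mul_cancel₀ h3.ne'
            have hkey : (1:ℝ)/2 ≤ (Real.exp (1/2:ℝ))⁻¹ := by
              rw [le_inv_comm₀ (by norm_num) h3]
              norm_num
              linarith
            have := Real.exp_pos μ
            nlinarith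
    calc Real.exp μ / (4*π^2*μ) = (1/(2*π^2*μ)) * (Real.exp μ / 2) := by ring
      _ ≤ (1 - Real.cos x) * Real.exp (μ * Real.cos x) := by
          apply mul_le_mul hcub hexp (by positivity) (by linarith [hnn x, Real.cos_le_one x])
  have step1 : (b - a) * (Real.exp μ / (4*π^2*μ))
      ≤ ∫ x in a..b, (1 - Real.cos x) * Real.exp (μ * Real.cos x) :=
    const_le hab.le (contI (continuous_const.sub Real.continuous_cos) μ a b) hpt
  have step2 : (∫ x in a..b, (1 - Real.cos x) * Real.exp (μ * Real.cos x))
      ≤ ∫ x in (-π)..π, (1 - Real.cos x) * Real.exp (μ * Real.cos x) :=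
    sub_le (contI (continuous_const.sub Real.continuous_cos) μ (-π) π) hnn (by linarith [ha0, Real.pi_pos]) hab.le
      (by linarith)
  have hba : b - a = 1/(2*Real.sqrt μ) := by rw [ha, hb]; field_simp; ring
  have : (b - a) * (Real.exp μ / (4*π^2*μ)) = Real.exp μ / (8*π^2*μ*Real.sqrt μ) := by
    rw [hba]; field_simp; ring
  linarith [this ▸ step1]

noncomputable def Cg : ℝ := 16*π^7*Real.sqrt π + 16*Real.exp 1^2

lemma Cg_pos : 0 < Cg := by
  have := Real.pi_pos
  have := Real.exp_pos 1
  have : 0 < Real.sqrt π := Real.sqrt_pos.mpr Real.pi_pos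
  unfold Cg; positivity

lemma Dm_eq (μ : ℝ) : Dm μ = m0 μ - m1 μ := by
  unfold Dm m0 m1 mom
  rw [← intervalIntegral.integral_sub (contI continuous_const μ 0 (2*π))
    (contI Real.continuous_cos μ 0 (2*π))]
  apply intervalIntegral.integral_congr; intro θ _; ring

lemma Em_eq (μ : ℝ) : Em μ = m0 μ - 2 * m1 μ + m2 μ := by
  unfold Em m0 m1 m2 mom
  rw [← intervalIntegral.integral_const_mul,
    ← intervalIntegral.integral_sub (contI continuous_const μ 0 (2*π))
      ((contI Real.continuous_cos μ 0 (2*π)).const_mul 2),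
    ← intervalIntegral.integral_add
      ((contI continuous_const μ 0 (2*π)).sub ((contI Real.continuous_cos μ 0 (2*π)).const_mul 2))
      (contI (w := fun θ => Real.cos θ ^ 2) (Real.continuous_cos.pow 2) μ 0 (2*π))]
  apply intervalIntegral.integral_congr; intro θ _; ring

lemma Em_nonneg (μ : ℝ) : 0 ≤ Em μ := by
  apply intervalIntegral.integral_nonneg tpp.le
  intro x _
  show (0:ℝ) ≤ (1 - Real.cos x)^2 * Real.exp (μ * Real.cos x)
  positivity

lemma Dm_nonneg (μ : ℝ) : 0 ≤ Dm μ := by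
  apply intervalIntegral.integral_nonneg tpp.le
  intro x _
  show (0:ℝ) ≤ (1 - Real.cos x) * Real.exp (μ * Real.cos x)
  have := Real.cos_le_one x
  have := Real.exp_pos (μ * Real.cos x)
  nlinarith

/-- The key moment estimate: `2 μ E(μ) ≤ Cg D(μ)` for `μ ≥ 0`. -/
lemma key_ineq {μ : ℝ} (hμ : 0 ≤ μ) : 2*μ*Em μ ≤ Cg * Dm μ := by
  have hπ := Real.pi_pos
  have hsπ : 0 < Real.sqrt π := Real.sqrt_pos.mpr hπ
  have he1 := Real.exp_pos 1
  rcases le_or_gt μ 1 with hle | hgt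
  · -- small μ
    have hEm : Em μ ≤ 2*π * (4 * Real.exp 1) := by
      unfold Em mom
      calc (∫ θ in (0:ℝ)..(2*π), (1-Real.cos θ)^2 * Real.exp (μ * Real.cos θ))
          ≤ ∫ _θ in (0:ℝ)..(2*π), (4 * Real.exp 1) := by
            apply intervalIntegral.integral_mono_on tpp.le
              (contI ((continuous_const.sub Real.continuous_cos).pow 2) μ 0 (2*π))
              (_root_.intervalIntegrable_const)
            intro x _
            have hc1 := Real.cos_le_one x
            have hc2 := Real.neg_one_le_cos x
            have h1 : (1 - Real.cos x)^2 ≤ 4 := by nlinarith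
            have h2 : Real.exp (μ * Real.cos x) ≤ Real.exp 1 := by
              apply Real.exp_le_exp.mpr; nlinarith
            have := Real.exp_pos (μ * Real.cos x)
            simp only [Pi.pow_apply, Pi.sub_apply]
            nlinarith
        _ = 2*π * (4 * Real.exp 1) := by rw [intervalIntegral.integral_const]; simp [smul_eq_mul]
    have hDm : π * (Real.exp 1)⁻¹ ≤ Dm μ := by
      have hpt : ∀ x ∈ Set.Icc (π/2) (π/2 + π), (Real.exp 1)⁻¹
          ≤ (1 - Real.cos x) * Real.exp (μ * Real.cos x) := by
        intro x hx
        have hc : Real.cos x ≤ 0 :=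
          Real.cos_nonpos_of_pi_div_two_le_of_le hx.1 (by linarith [hx.2])
        have hc2 := Real.neg_one_le_cos x
        have h1 : (1:ℝ) ≤ 1 - Real.cos x := by linarith
        have h2 : Real.exp (-1) ≤ Real.exp (μ * Real.cos x) := by
          apply Real.exp_le_exp.mpr; nlinarith
        rw [Real.exp_neg] at h2
        have := Real.exp_pos (μ * Real.cos x)
        nlinarith [inv_pos.mpr he1]
      have hstep := const_le (f := fun x => (1 - Real.cos x) * Real.exp (μ * Real.cos x))
        (by linarith : π/2 ≤ π/2 + π)
        (contI (continuous_const.sub Real.continuous_cos) μ (π/2) (π/2+π)) hpt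
      have hsub := sub_le (f := fun x => (1 - Real.cos x) * Real.exp (μ * Real.cos x))
        (contI (continuous_const.sub Real.continuous_cos) μ 0 (2*π))
        (fun x => by
          show (0:ℝ) ≤ (1 - Real.cos x) * Real.exp (μ * Real.cos x)
          have := Real.cos_le_one x
          have := Real.exp_pos (μ * Real.cos x)
          nlinarith)
        (by linarith) (by linarith : π/2 ≤ π/2 + π) (by linarith)
      have : (π/2 + π - π/2) * (Real.exp 1)⁻¹ = π * (Real.exp 1)⁻¹ := by ring_nf
      unfold Dm mom
      calc π * (Real.exp 1)⁻¹ = (π/2 + π - π/2) * (Real.exp 1)⁻¹ := by ring_nf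
        _ ≤ ∫ x in (π/2)..(π/2+π), (1 - Real.cos x) * Real.exp (μ * Real.cos x) := hstep
        _ ≤ ∫ x in (0:ℝ)..(2*π), (1 - Real.cos x) * Real.exp (μ * Real.cos x) := hsub
    -- combine
    have hCg : 16 * Real.exp 1^2 ≤ Cg := by
      unfold Cg; nlinarith [mul_pos (pow_pos hπ 7) hsπ]
    have hinv : Real.exp 1 * (Real.exp 1)⁻¹ = 1 := mul_inv_cancel₀ he1.ne'
    have hd0 := Dm_nonneg μ
    have hE0 := Em_nonneg μ
    calc 2*μ*Em μ ≤ 2*1*(2*π*(4*Real.exp 1)) := by nlinarith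
      _ = 16*π*Real.exp 1 := by ring
      _ = 16*Real.exp 1^2 * (π * (Real.exp 1)⁻¹) := by
          have hinv2 : Real.exp 1 * (Real.exp 1)⁻¹ = 1 := mul_inv_cancel₀ he1.ne'
          linear_combination (-16*π*Real.exp 1) * hinv2
      _ ≤ 16*Real.exp 1^2 * Dm μ := by
          apply mul_le_mul_of_nonneg_left hDm (by positivity)
      _ ≤ Cg * Dm μ := mul_le_mul_of_nonneg_right hCg hd0
  · -- large μ
    have hμ1 : 1 ≤ μ := hgt.le
    have hμ0 : (0:ℝ) < μ := by linarith
    have hsμ : 0 < Real.sqrt μ := Real.sqrt_pos.mpr hμ0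
    have hssq : Real.sqrt μ ^ 2 = μ := Real.sq_sqrt hμ0.le
    have hsπ2 : Real.sqrt π ^ 2 = π := Real.sq_sqrt hπ.le
    have hE := Em_le hμ1
    have hD := Dm_ge hμ1
    have hg : Real.sqrt (π/(μ/π^2)) = π * Real.sqrt π / Real.sqrt μ := by
      have h1 : (π * Real.sqrt π / Real.sqrt μ)^2 = π/(μ/π^2) := by
        rw [div_pow, mul_pow, hsπ2, hssq]; field_simp
      rw [← h1, Real.sqrt_sq (by positivity)]
    rw [hg] at hE
    have hCg : 16*π^7*Real.sqrt π ≤ Cg := by unfold Cg; nlinarith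
    have hd0 := Dm_nonneg μ
    have heμ := Real.exp_pos μ
    calc 2*μ*Em μ ≤ 2*μ*(Real.exp μ * (π^4/μ^2) * (π * Real.sqrt π / Real.sqrt μ)) := by
          nlinarith [Em_nonneg μ]
      _ = 16*π^7*Real.sqrt π * (Real.exp μ / (8*π^2*μ*Real.sqrt μ)) := by
          field_simp; ring
      _ ≤ 16*π^7*Real.sqrt π * Dm μ := by
          apply mul_le_mul_of_nonneg_left hD (by positivity)
      _ ≤ Cg * Dm μ := mul_le_mul_of_nonneg_right hCg hd0
lemma mom_continuous {w : ℝ → ℝ} (hw : Continuous w) (hwb : ∀ θ, |w θ| ≤ 1) :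
    Continuous (mom w) := by
  rw [continuous_iff_continuousAt]
  exact fun μ => (mom_hasDerivAt hw hwb μ).continuousAt

lemma m0_hasDeriv (μ : ℝ) : HasDerivAt m0 (m1 μ) μ := by
  have h := mom_hasDerivAt (w := fun _ => (1:ℝ)) continuous_const (fun θ => by norm_num) μ
  have he : (fun θ : ℝ => (1:ℝ) * Real.cos θ) = Real.cos := funext fun θ => one_mul _
  rw [he] at h
  exact h

lemma m1_hasDeriv (μ : ℝ) : HasDerivAt m1 (m2 μ) μ := by
  have h := mom_hasDerivAt (w := Real.cos) Real.continuous_cos (fun θ => Real.abs_cos_le_one θ) μ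
  have he : (fun θ : ℝ => Real.cos θ * Real.cos θ) = fun θ => Real.cos θ ^ 2 :=
    funext fun θ => (sq (Real.cos θ)).symm
  rw [he] at h
  exact h

lemma m0_cont : Continuous m0 := by
  rw [continuous_iff_continuousAt]
  exact fun μ => (m0_hasDeriv μ).continuousAt

lemma m1_cont : Continuous m1 := by
  rw [continuous_iff_continuousAt]
  exact fun μ => (m1_hasDeriv μ).continuousAt

lemma m2_cont : Continuous m2 :=
  mom_continuous (Real.continuous_cos.pow 2)
    (fun θ => by rw [abs_of_nonneg (sq_nonneg _)]; exact Real.cos_sq_le_one θ)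

lemma qTilde_eq (μ : ℝ) : qTilde μ = m1 μ / (2 * m0 μ) := by
  rw [qTilde, besselI_one_eq, besselI_zero_eq]
  have h0 := (m0_pos μ).ne'
  have hπ : π ≠ 0 := Real.pi_ne_zero
  field_simp

/-- the derivative of `qTilde` -/
noncomputable def qd (μ : ℝ) : ℝ := (m2 μ * m0 μ - m1 μ^2) / (2 * m0 μ^2)

lemma qTilde_hasDeriv (μ : ℝ) : HasDerivAt qTilde (qd μ) μ := by
  rw [show qTilde = fun μ => m1 μ / (2*m0 μ) from funext qTilde_eq]
  have h0 := (m0_pos μ).ne'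
  have h := (m1_hasDeriv μ).div ((m0_hasDeriv μ).const_mul 2)
    (mul_ne_zero two_ne_zero h0)
  refine h.congr_deriv ?_
  unfold qd
  field_simp

lemma qTilde_cont : Continuous qTilde := by
  rw [show qTilde = fun μ => m1 μ / (2*m0 μ) from funext qTilde_eq]
  exact m1_cont.div (continuous_const.mul m0_cont)
    (fun x => mul_ne_zero two_ne_zero (m0_pos x).ne')

lemma qd_nonneg (μ : ℝ) : 0 ≤ qd μ := by
  apply div_nonneg
  · nlinarith [cs μ]
  · positivity

lemma qd_cont : Continuous qd := by
  apply Continuous.div ((m2_cont.mul m0_cont).sub (m1_cont.pow 2))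
    (continuous_const.mul (m0_cont.pow 2))
  intro x
  have := m0_pos x
  exact (mul_pos two_pos (pow_pos this 2)).ne'

lemma qTilde_lt_half (μ : ℝ) : qTilde μ < 1/2 := by
  rw [qTilde_eq, div_lt_iff₀ (by nlinarith [m0_pos μ])]
  nlinarith [m0_sub_m1_pos μ]

lemma neg_half_lt_qTilde (μ : ℝ) : -(1/2) < qTilde μ := by
  rw [qTilde_eq, lt_div_iff₀ (by nlinarith [m0_pos μ])]
  nlinarith [m0_add_m1_pos μ]

noncomputable def gFun (μ : ℝ) : ℝ :=
  2*μ - qTilde μ / ((1/2 + qTilde μ) * (1/2 - qTilde μ))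

lemma gFun_cont : Continuous gFun := by
  apply Continuous.sub (continuous_const.mul continuous_id)
  apply Continuous.div qTilde_cont
    ((continuous_const.add qTilde_cont).mul (continuous_const.sub qTilde_cont))
  intro x
  have hA : 0 < 1/2 + qTilde x := by linarith [neg_half_lt_qTilde x]
  have hB : 0 < 1/2 - qTilde x := by linarith [qTilde_lt_half x]
  exact (mul_pos hA hB).ne'

lemma hQ2 (μ : ℝ) : qTilde μ * (2 * m0 μ) = m1 μ := by
  rw [qTilde_eq]
  exact div_mul_cancel₀ _ (mul_ne_zero two_ne_zero (m0_pos μ).ne')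

lemma hABm (μ : ℝ) :
    (1/2 + qTilde μ) * (1/2 - qTilde μ) * (4 * m0 μ^2) = m0 μ^2 - m1 μ^2 := by
  linear_combination (-(m1 μ + 2 * qTilde μ * m0 μ)) * hQ2 μ

lemma gFun_nonneg {μ : ℝ} (hμ : 0 ≤ μ) : 0 ≤ gFun μ := by
  have hA : 0 < 1/2 + qTilde μ := by linarith [neg_half_lt_qTilde μ]
  have hB : 0 < 1/2 - qTilde μ := by linarith [qTilde_lt_half μ]
  have hABpos : 0 < (1/2 + qTilde μ) * (1/2 - qTilde μ) := mul_pos hA hB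
  rw [gFun, sub_nonneg, div_le_iff₀ hABpos]
  have hx2 : (0:ℝ) < 4 * m0 μ^2 := by have := m0_pos μ; positivity
  have heq : (2*μ*((1/2 + qTilde μ) * (1/2 - qTilde μ)) - qTilde μ) * (4*m0 μ^2)
      = 2*μ*(m0 μ^2 - m1 μ^2) - 2*m0 μ*m1 μ := by
    linear_combination (2*μ) * hABm μ - (2*m0 μ) * hQ2 μ
  have hsub : 2*μ*(m0 μ^2 - m1 μ^2) - 2*m0 μ*m1 μ = 2*μ*(m0 μ*m2 μ - m1 μ^2) := by
    linear_combination (-2*m0 μ) * (m1_eq μ)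
  have hrhs : 0 ≤ 2*μ*(m0 μ*m2 μ - m1 μ^2) := by
    apply mul_nonneg (by linarith)
    nlinarith [cs μ]
  have h6 : 0 ≤ (2*μ*((1/2 + qTilde μ) * (1/2 - qTilde μ)) - qTilde μ) * (4*m0 μ^2) := by
    rw [heq, hsub]; exact hrhs
  nlinarith [h6, hx2]

lemma gFun_le {μ : ℝ} (hμ : 0 ≤ μ) : gFun μ ≤ Cg := by
  have hA : 0 < 1/2 + qTilde μ := by linarith [neg_half_lt_qTilde μ]
  have hB : 0 < 1/2 - qTilde μ := by linarith [qTilde_lt_half μ]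
  have hABpos : 0 < (1/2 + qTilde μ) * (1/2 - qTilde μ) := mul_pos hA hB
  have hx2 : (0:ℝ) < 4 * m0 μ^2 := by have := m0_pos μ; positivity
  have hkey := key_ineq hμ
  rw [Em_eq, Dm_eq] at hkey
  have hD0 : 0 ≤ m0 μ - m1 μ := (m0_sub_m1_pos μ).le
  have hy0 : 0 ≤ m1 μ := m1_nonneg hμ
  have hmain : 2*μ*(m0 μ*m2 μ - m1 μ^2) ≤ Cg*(m0 μ^2 - m1 μ^2) := by
    nlinarith [mul_le_mul_of_nonneg_left hkey (m0_pos μ).le,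
      mul_nonneg (mul_nonneg Cg_pos.le hD0) hy0,
      mul_nonneg hμ (sq_nonneg (m0 μ - m1 μ))]
  have hsub : 2*μ*(m0 μ^2 - m1 μ^2) - 2*m0 μ*m1 μ = 2*μ*(m0 μ*m2 μ - m1 μ^2) := by
    linear_combination (-2*m0 μ) * (m1_eq μ)
  have hineq : (2*μ - Cg)*(m0 μ^2 - m1 μ^2) ≤ 2*m0 μ*m1 μ := by nlinarith [hmain, hsub]
  have heq2 : ((2*μ - Cg)*((1/2 + qTilde μ) * (1/2 - qTilde μ)) - qTilde μ)*(4*m0 μ^2)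
      = (2*μ - Cg)*(m0 μ^2 - m1 μ^2) - 2*m0 μ*m1 μ := by
    linear_combination (2*μ - Cg) * hABm μ - (2*m0 μ) * hQ2 μ
  have hstep : (2*μ - Cg) * ((1/2 + qTilde μ) * (1/2 - qTilde μ)) ≤ qTilde μ := by
    nlinarith [heq2, hineq, hx2]
  have hfin : 2*μ - Cg ≤ qTilde μ / ((1/2 + qTilde μ) * (1/2 - qTilde μ)) :=
    (le_div_iff₀ hABpos).mpr hstep
  rw [gFun]
  linarith

lemma besselI_zero_pos (μ : ℝ) : 0 < besselI 0 μ := by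
  rw [besselI_zero_eq]
  have := m0_pos μ
  have := Real.pi_pos
  positivity

lemma besselI_zero_hasDeriv (μ : ℝ) : HasDerivAt (besselI 0) (besselI 1 μ) μ := by
  rw [show besselI 0 = fun μ => (1/(2*π)) * m0 μ from funext besselI_zero_eq,
    besselI_one_eq]
  exact (m0_hasDeriv μ).const_mul _

lemma deltaS2d_hasDeriv (μ : ℝ) : HasDerivAt deltaS2d (qd μ * gFun μ) μ := by
  have hq' := qTilde_hasDeriv μ
  have hb0p := besselI_zero_pos μ
  have hA : 0 < 1/2 + qTilde μ := by linarith [neg_half_lt_qTilde μ]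
  have hB : 0 < 1/2 - qTilde μ := by linarith [qTilde_lt_half μ]
  have h1 : HasDerivAt (fun μ : ℝ => 2*μ*qTilde μ) (2*qTilde μ + 2*μ*qd μ) μ := by
    have := ((hasDerivAt_id μ).const_mul (2:ℝ)).mul hq'
    refine this.congr_deriv ?_
    simp only [id_eq]
    ring
  have h2 : HasDerivAt (fun μ => Real.log (besselI 0 μ))
      (besselI 1 μ / besselI 0 μ) μ := (besselI_zero_hasDeriv μ).log hb0p.ne'
  have h3 : HasDerivAt (fun μ => (1/2 + qTilde μ) * (1/2 - qTilde μ))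
      ((0 + qd μ)*(1/2 - qTilde μ) + (1/2 + qTilde μ)*(0 - qd μ)) μ :=
    ((hasDerivAt_const μ (1/2:ℝ)).add hq').mul ((hasDerivAt_const μ (1/2:ℝ)).sub hq')
  have h4 := h3.log (ne_of_gt (mul_pos hA hB))
  have h5 := (h1.sub h2).add (h4.const_mul (1/2:ℝ))
  have hfun : deltaS2d = fun μ => 2*μ*qTilde μ - Real.log (besselI 0 μ)
      + 1/2 * Real.log ((1/2 + qTilde μ) * (1/2 - qTilde μ)) := by
    funext x
    rw [deltaS2d]
  rw [hfun]
  refine h5.congr_deriv ?_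
  have hb1 : besselI 1 μ / besselI 0 μ = 2 * qTilde μ := by
    rw [qTilde]
    field_simp
  rw [hb1, gFun]
  ring

lemma qTilde_diff (a b : ℝ) : ∫ x in a..b, qd x = qTilde b - qTilde a :=
  intervalIntegral.integral_eq_sub_of_hasDerivAt (fun x _ => qTilde_hasDeriv x)
    (qd_cont.intervalIntegrable a b)

lemma deltaS_diff (a b : ℝ) :
    ∫ x in a..b, qd x * gFun x = deltaS2d b - deltaS2d a :=
  intervalIntegral.integral_eq_sub_of_hasDerivAt (fun x _ => deltaS2d_hasDeriv x)
    ((qd_cont.mul gFun_cont).intervalIntegrable a b)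

lemma qTilde_mono {a b : ℝ} (hab : a ≤ b) : qTilde a ≤ qTilde b := by
  have h := qTilde_diff a b
  have h2 : 0 ≤ ∫ x in a..b, qd x :=
    intervalIntegral.integral_nonneg hab (fun x _ => qd_nonneg x)
  linarith

lemma qTilde_zero : qTilde 0 = 0 := by
  have h : besselI 1 0 = 0 := by
    rw [besselI]
    have : (∫ θ in (0:ℝ)..(2*π), Real.exp (0 * Real.cos θ) * Real.cos (((1:ℤ):ℝ) * θ)) = 0 := by
      rw [intervalIntegral.integral_congr (g := fun θ => Real.cos θ)
        (fun θ _ => by norm_num)]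
      rw [integral_cos]
      simp [Real.sin_two_pi]
    rw [this, mul_zero]
  rw [qTilde, h, zero_div]

lemma qTilde_nonneg {μ : ℝ} (hμ : 0 ≤ μ) : 0 ≤ qTilde μ :=
  qTilde_zero ▸ qTilde_mono hμ

lemma main_seg {a b : ℝ} (h0 : 0 ≤ a) (hab : a ≤ b) :
    |deltaS2d b - deltaS2d a| ≤ Cg * (qTilde b - qTilde a) := by
  have hS := deltaS_diff a b
  have hq := qTilde_diff a b
  have h1 : 0 ≤ ∫ x in a..b, qd x * gFun x :=
    intervalIntegral.integral_nonneg hab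
      (fun x hx => mul_nonneg (qd_nonneg x) (gFun_nonneg (le_trans h0 hx.1)))
  have h2 : (∫ x in a..b, qd x * gFun x) ≤ ∫ x in a..b, Cg * qd x := by
    apply intervalIntegral.integral_mono_on hab
      ((qd_cont.mul gFun_cont).intervalIntegrable a b)
      ((continuous_const.mul qd_cont).intervalIntegrable a b)
    intro x hx
    have hg := gFun_le (le_trans h0 hx.1)
    have hg0 := gFun_nonneg (le_trans h0 hx.1)
    have hqd := qd_nonneg x
    simp only [Pi.mul_apply]
    nlinarith [mul_nonneg hqd (sub_nonneg.mpr hg)]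
  have h3 : (∫ x in a..b, Cg * qd x) = Cg * ∫ x in a..b, qd x :=
    intervalIntegral.integral_const_mul _ _
  rw [abs_of_nonneg (by linarith)]
  rw [← hq]
  linarith

lemma flip {f : ℝ → ℝ} (hper : Function.Periodic f (2*π)) :
    (∫ θ in (0:ℝ)..(2*π), f (θ + π)) = ∫ θ in (0:ℝ)..(2*π), f θ := by
  rw [intervalIntegral.integral_comp_add_right f π]
  have h := hper.intervalIntegral_add_eq π 0
  rw [zero_add] at h
  rw [show (0:ℝ) + π = π by ring, show 2*π + π = π + 2*π by ring]
  exact h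

lemma besselI_zero_even (μ : ℝ) : besselI 0 (-μ) = besselI 0 μ := by
  rw [besselI, besselI]
  congr 1
  have hper : Function.Periodic
      (fun θ => Real.exp (μ * Real.cos θ) * Real.cos (((0:ℤ):ℝ) * θ)) (2*π) := by
    intro x; simp [Real.cos_add_two_pi]
  have h1 : (∫ θ in (0:ℝ)..(2*π), Real.exp (-μ * Real.cos θ) * Real.cos (((0:ℤ):ℝ) * θ))
      = ∫ θ in (0:ℝ)..(2*π),
          (fun θ => Real.exp (μ * Real.cos θ) * Real.cos (((0:ℤ):ℝ) * θ)) (θ + π) := by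
    apply intervalIntegral.integral_congr
    intro θ _
    simp [Real.cos_add_pi, mul_neg, neg_mul]
  rw [h1, flip hper]

lemma besselI_one_odd (μ : ℝ) : besselI 1 (-μ) = -besselI 1 μ := by
  rw [besselI, besselI]
  rw [← mul_neg, ← intervalIntegral.integral_neg]
  congr 1
  have hper : Function.Periodic
      (fun θ => Real.exp (μ * Real.cos θ) * Real.cos (((1:ℤ):ℝ) * θ)) (2*π) := by
    intro x
    simp [Real.cos_add_two_pi]
  have h1 : (∫ θ in (0:ℝ)..(2*π), Real.exp (-μ * Real.cos θ) * Real.cos (((1:ℤ):ℝ) * θ))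
      = ∫ θ in (0:ℝ)..(2*π),
          -((fun θ => Real.exp (μ * Real.cos θ) * Real.cos (((1:ℤ):ℝ) * θ)) (θ + π)) := by
    apply intervalIntegral.integral_congr
    intro θ _
    simp only [Int.cast_one, one_mul, Real.cos_add_pi]
    rw [show μ * -Real.cos θ = -μ * Real.cos θ by ring]
    ring
  rw [h1, intervalIntegral.integral_neg, flip hper]
  exact (intervalIntegral.integral_neg).symm

lemma qTilde_odd (μ : ℝ) : qTilde (-μ) = -qTilde μ := by
  rw [qTilde, qTilde, besselI_one_odd, besselI_zero_even, neg_div]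

lemma deltaS2d_even (μ : ℝ) : deltaS2d (-μ) = deltaS2d μ := by
  rw [deltaS2d, deltaS2d, qTilde_odd, besselI_zero_even]
  rw [show (1/2 + -qTilde μ) * (1/2 - -qTilde μ)
      = (1/2 + qTilde μ) * (1/2 - qTilde μ) by ring]
  ring

lemma both_nonneg {a b : ℝ} (ha : 0 ≤ a) (hb : 0 ≤ b) :
    |deltaS2d a - deltaS2d b| ≤ Cg * |qTilde a - qTilde b| := by
  rcases le_total a b with hab | hab
  · rw [abs_sub_comm, abs_sub_comm (qTilde a)]
    rw [abs_of_nonneg (sub_nonneg.mpr (qTilde_mono hab))]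
    exact main_seg ha hab
  · rw [abs_of_nonneg (sub_nonneg.mpr (qTilde_mono hab))]
    exact main_seg hb hab

end Corr2d

/-- Lipschitz continuity of the correction term of the 2D entropy decomposition:
there is a constant `C > 0` with `|ΔS̃(μ₁) − ΔS̃(μ₂)| ≤ C |q̃(μ₁) − q̃(μ₂)|`. -/
theorem correction_2d_lipschitz :
    ∃ C : ℝ, 0 < C ∧ ∀ μ₁ μ₂ : ℝ,
      |deltaS2d μ₁ - deltaS2d μ₂| ≤ C * |qTilde μ₁ - qTilde μ₂| := by
  refine ⟨Corr2d.Cg, Corr2d.Cg_pos, ?_⟩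
  have key : ∀ μ₁ μ₂ : ℝ, 0 ≤ μ₁ →
      |deltaS2d μ₁ - deltaS2d μ₂| ≤ Corr2d.Cg * |qTilde μ₁ - qTilde μ₂| := by
    intro μ₁ μ₂ h1
    rcases le_total 0 μ₂ with h2 | h2
    · exact Corr2d.both_nonneg h1 h2
    · -- μ₂ ≤ 0
      have hq1 : 0 ≤ qTilde μ₁ := Corr2d.qTilde_nonneg h1
      have hq2 : qTilde μ₂ ≤ 0 := by
        have h := Corr2d.qTilde_nonneg (neg_nonneg.mpr h2)
        rw [show -μ₂ = -μ₂ from rfl, Corr2d.qTilde_odd] at h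
        linarith
      have h := Corr2d.both_nonneg h1 (neg_nonneg.mpr h2)
      rw [Corr2d.qTilde_odd, Corr2d.deltaS2d_even] at h
      have habs : |qTilde μ₁ - -qTilde μ₂| ≤ |qTilde μ₁ - qTilde μ₂| := by
        rw [abs_of_nonneg (by linarith : 0 ≤ qTilde μ₁ - qTilde μ₂)]
        apply abs_le.mpr
        constructor <;> linarith
      calc |deltaS2d μ₁ - deltaS2d μ₂| ≤ Corr2d.Cg * |qTilde μ₁ - -qTilde μ₂| := h
        _ ≤ Corr2d.Cg * |qTilde μ₁ - qTilde μ₂| :=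
            mul_le_mul_of_nonneg_left habs Corr2d.Cg_pos.le
  intro μ₁ μ₂
  rcases le_total 0 μ₁ with h1 | h1
  · exact key μ₁ μ₂ h1
  · rcases le_total 0 μ₂ with h2 | h2
    · rw [abs_sub_comm, abs_sub_comm (qTilde μ₁)]
      exact key μ₂ μ₁ h2
    · -- both nonpositive
      have h := key (-μ₁) (-μ₂) (neg_nonneg.mpr h1)
      rw [Corr2d.deltaS2d_even, Corr2d.deltaS2d_even,
        Corr2d.qTilde_odd, Corr2d.qTilde_odd] at h
      rw [show -qTilde μ₁ - -qTilde μ₂ = -(qTilde μ₁ - qTilde μ₂) by ring, abs_neg] at h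
      exact h
end

section
/- The function φ(z) = z (I₀(z) − I₁(z)) / I₀(z) satisfies lim_{z→+∞} φ(z) = 1/2, and φ is bounded on [0, ∞). -/
open Real Filter

open MeasureTheory Set

noncomputable def besselD (z : ℝ) : ℝ :=
  ∫ θ in (0:ℝ)..π, Real.exp (-(z * (1 - Real.cos θ)))

noncomputable def besselN (z : ℝ) : ℝ :=
  ∫ θ in (0:ℝ)..π, Real.exp (-(z * (1 - Real.cos θ))) * (1 - Real.cos θ)

lemma contD (z : ℝ) : Continuous fun θ : ℝ => Real.exp (-(z * (1 - Real.cos θ))) := by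
  continuity

lemma contN (z : ℝ) :
    Continuous fun θ : ℝ => Real.exp (-(z * (1 - Real.cos θ))) * (1 - Real.cos θ) := by
  continuity

lemma besselD_pos (z : ℝ) : 0 < besselD z :=
  intervalIntegral.intervalIntegral_pos_of_pos ((contD z).intervalIntegrable _ _)
    (fun _ => Real.exp_pos _) Real.pi_pos

lemma besselN_nonneg (z : ℝ) : 0 ≤ besselN z := by
  apply intervalIntegral.integral_nonneg Real.pi_pos.le
  intro θ _
  have := Real.cos_le_one θ
  have := (Real.exp_pos (-(z * (1 - Real.cos θ)))).le
  nlinarith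

lemma besselN_le (z : ℝ) : besselN z ≤ 2 * besselD z := by
  have h : besselN z ≤ ∫ θ in (0:ℝ)..π, 2 * Real.exp (-(z * (1 - Real.cos θ))) := by
    apply intervalIntegral.integral_mono_on Real.pi_pos.le
      ((contN z).intervalIntegrable _ _)
      ((by continuity : Continuous fun θ : ℝ => 2 * Real.exp (-(z * (1 - Real.cos θ)))).intervalIntegrable _ _)
    intro θ _
    have := Real.neg_one_le_cos θ
    have he := (Real.exp_pos (-(z * (1 - Real.cos θ)))).le
    nlinarith
  rwa [intervalIntegral.integral_const_mul] at h


lemma integral_cos_symm (F : ℝ → ℝ) (hF : Continuous F) :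
    ∫ θ in (0:ℝ)..(2 * π), F (Real.cos θ) = 2 * ∫ θ in (0:ℝ)..π, F (Real.cos θ) := by
  have hc : Continuous fun θ : ℝ => F (Real.cos θ) := hF.comp Real.continuous_cos
  have h1 : IntervalIntegrable (fun θ => F (Real.cos θ)) volume 0 π :=
    hc.intervalIntegrable _ _
  have h2 : IntervalIntegrable (fun θ => F (Real.cos θ)) volume π (2 * π) :=
    hc.intervalIntegrable _ _
  rw [← intervalIntegral.integral_add_adjacent_intervals h1 h2]
  have h3 : (∫ θ in π..(2 * π), F (Real.cos θ)) = ∫ θ in (0:ℝ)..π, F (Real.cos θ) := by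
    have h := intervalIntegral.integral_comp_sub_left (a := 0) (b := π)
      (fun θ => F (Real.cos θ)) (2 * π)
    have h4 : ∀ x : ℝ, F (Real.cos (2 * π - x)) = F (Real.cos x) := by
      intro x; rw [Real.cos_sub, Real.cos_two_pi, Real.sin_two_pi]; ring_nf
    simp only [h4] at h
    norm_num at h
    rw [show 2 * π - π = π by ring] at h
    rw [← h]
  rw [h3]; ring

lemma exp_cos_eq (z θ : ℝ) :
    Real.exp (z * Real.cos θ) = Real.exp z * Real.exp (-(z * (1 - Real.cos θ))) := by
  rw [← Real.exp_add]; ring_nf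

lemma besselI_zero_eq (z : ℝ) : besselI 0 z = Real.exp z * besselD z / π := by
  unfold besselI
  have h0 : ∀ θ : ℝ, Real.exp (z * Real.cos θ) * Real.cos (((0:ℤ) : ℝ) * θ)
      = (fun c => Real.exp (z * c)) (Real.cos θ) := by
    intro θ; simp
  rw [intervalIntegral.integral_congr (fun θ _ => h0 θ)]
  rw [integral_cos_symm (fun c => Real.exp (z * c)) (by continuity)]
  have h1 : (∫ θ in (0:ℝ)..π, Real.exp (z * Real.cos θ))
      = Real.exp z * besselD z := by
    unfold besselD
    rw [← intervalIntegral.integral_const_mul]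
    exact intervalIntegral.integral_congr (fun θ _ => exp_cos_eq z θ)
  rw [h1]
  have hπ := Real.pi_ne_zero
  field_simp

lemma besselI_sub_eq (z : ℝ) :
    besselI 0 z - besselI 1 z = Real.exp z * besselN z / π := by
  unfold besselI
  have hint1 : IntervalIntegrable (fun θ => Real.exp (z * Real.cos θ) * Real.cos (((0:ℤ):ℝ) * θ))
      volume 0 (2 * π) := by
    apply Continuous.intervalIntegrable; continuity
  have hint2 : IntervalIntegrable (fun θ => Real.exp (z * Real.cos θ) * Real.cos (((1:ℤ):ℝ) * θ))
      volume 0 (2 * π) := by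
    apply Continuous.intervalIntegrable; continuity
  rw [← mul_sub, ← intervalIntegral.integral_sub hint1 hint2]
  have h0 : ∀ θ : ℝ, (Real.exp (z * Real.cos θ) * Real.cos (((0:ℤ):ℝ) * θ)
      - Real.exp (z * Real.cos θ) * Real.cos (((1:ℤ):ℝ) * θ))
      = (fun c => Real.exp (z * c) * (1 - c)) (Real.cos θ) := by
    intro θ; simp; ring
  rw [intervalIntegral.integral_congr (fun θ _ => h0 θ)]
  rw [integral_cos_symm (fun c => Real.exp (z * c) * (1 - c)) (by continuity)]
  have h1 : (∫ θ in (0:ℝ)..π, Real.exp (z * Real.cos θ) * (1 - Real.cos θ))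
      = Real.exp z * besselN z := by
    unfold besselN
    rw [← intervalIntegral.integral_const_mul]
    refine intervalIntegral.integral_congr (fun θ _ => ?_)
    simp only [exp_cos_eq z θ]; ring
  rw [h1]
  have hπ := Real.pi_ne_zero
  field_simp

lemma phi_eq (z : ℝ) :
    z * (besselI 0 z - besselI 1 z) / besselI 0 z = z * besselN z / besselD z := by
  rw [besselI_sub_eq, besselI_zero_eq]
  have hD := (besselD_pos z).ne'
  have he := Real.exp_ne_zero z
  have hπ := Real.pi_ne_zero
  field_simp

/-- The rescaled integrand for the denominator. -/
noncomputable def FD (z u : ℝ) : ℝ :=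
  (Set.Ioc (0:ℝ) (π * Real.sqrt z)).indicator
    (fun u => Real.exp (-(z * (1 - Real.cos (u / Real.sqrt z))))) u

/-- The rescaled integrand for the numerator. -/
noncomputable def FN (z u : ℝ) : ℝ :=
  (Set.Ioc (0:ℝ) (π * Real.sqrt z)).indicator
    (fun u => Real.exp (-(z * (1 - Real.cos (u / Real.sqrt z))))
      * (z * (1 - Real.cos (u / Real.sqrt z)))) u

lemma subst_D {z : ℝ} (hz : 0 < z) : Real.sqrt z * besselD z = ∫ u, FD z u := by
  have hs : Real.sqrt z ≠ 0 := (Real.sqrt_pos.mpr hz).ne'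
  have h := intervalIntegral.integral_comp_div (a := 0) (b := π * Real.sqrt z)
    (c := Real.sqrt z) (fun θ => Real.exp (-(z * (1 - Real.cos θ)))) hs
  rw [zero_div, mul_div_assoc, div_self hs, mul_one, smul_eq_mul] at h
  unfold FD
  rw [MeasureTheory.integral_indicator measurableSet_Ioc,
    ← intervalIntegral.integral_of_le (by positivity : (0:ℝ) ≤ π * Real.sqrt z), h]
  rfl

lemma subst_N {z : ℝ} (hz : 0 < z) :
    Real.sqrt z * (z * besselN z) = ∫ u, FN z u := by
  have hs : Real.sqrt z ≠ 0 := (Real.sqrt_pos.mpr hz).ne'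
  have h := intervalIntegral.integral_comp_div (a := 0) (b := π * Real.sqrt z)
    (c := Real.sqrt z)
    (fun θ => Real.exp (-(z * (1 - Real.cos θ))) * (z * (1 - Real.cos θ))) hs
  rw [zero_div, mul_div_assoc, div_self hs, mul_one, smul_eq_mul] at h
  unfold FN
  rw [MeasureTheory.integral_indicator measurableSet_Ioc,
    ← intervalIntegral.integral_of_le (by positivity : (0:ℝ) ≤ π * Real.sqrt z), h]
  have h2 : (∫ θ in (0:ℝ)..π, Real.exp (-(z * (1 - Real.cos θ))) * (z * (1 - Real.cos θ)))
      = z * besselN z := by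
    unfold besselN
    rw [← intervalIntegral.integral_const_mul]
    exact intervalIntegral.integral_congr (fun θ _ => by ring)
  rw [h2]

lemma key_lim {u : ℝ} (hu : 0 < u) :
    Tendsto (fun z : ℝ => z * (1 - Real.cos (u / Real.sqrt z))) atTop (nhds (u ^ 2 / 2)) := by
  have h0 : Tendsto (fun z : ℝ => u ^ 4 * (5 / 96) / z) atTop (nhds 0) :=
    Tendsto.div_atTop tendsto_const_nhds tendsto_id
  have key : ∀ᶠ z in atTop,
      ‖z * (1 - Real.cos (u / Real.sqrt z)) - u ^ 2 / 2‖ ≤ u ^ 4 * (5 / 96) / z := by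
    filter_upwards [eventually_ge_atTop (max 1 (u ^ 2))] with z hz
    have hz1 : (1:ℝ) ≤ z := le_trans (le_max_left _ _) hz
    have hzu : u ^ 2 ≤ z := le_trans (le_max_right _ _) hz
    have hzpos : (0:ℝ) < z := by linarith
    have hsp : 0 < Real.sqrt z := Real.sqrt_pos.mpr hzpos
    set t := u / Real.sqrt z with htdef
    have ht2 : z * t ^ 2 = u ^ 2 := by
      rw [htdef, div_pow, Real.sq_sqrt hzpos.le]
      field_simp
    have ht : |t| ≤ 1 := by
      rw [abs_of_pos (div_pos hu hsp)]
      rw [div_le_one hsp]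
      calc u = Real.sqrt (u ^ 2) := by rw [Real.sqrt_sq hu.le]
        _ ≤ Real.sqrt z := Real.sqrt_le_sqrt hzu
    have hb := Real.cos_bound ht
    have heq : z * (1 - Real.cos t) - u ^ 2 / 2
        = -(z * (Real.cos t - (1 - t ^ 2 / 2))) := by
      rw [← ht2]; ring
    rw [Real.norm_eq_abs, heq, abs_neg, abs_mul, abs_of_pos hzpos]
    have hs4 : Real.sqrt z ^ 4 = z ^ 2 := by
      rw [show (4:ℕ) = 2 * 2 from rfl, pow_mul, Real.sq_sqrt hzpos.le]
    have ht4 : |t| ^ 4 = u ^ 4 / z ^ 2 := by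
      rw [← abs_pow, htdef, div_pow, hs4, abs_of_nonneg (by positivity)]
    calc z * |Real.cos t - (1 - t ^ 2 / 2)| ≤ z * (|t| ^ 4 * (5 / 96)) := by
          exact mul_le_mul_of_nonneg_left hb hzpos.le
      _ = u ^ 4 * (5 / 96) / z := by
          rw [ht4]; field_simp
  have := squeeze_zero_norm' key h0
  have h2 := this.add_const (u ^ 2 / 2)
  simpa using h2

lemma zt_sq {z u : ℝ} (hz : 0 < z) : z * (u / Real.sqrt z) ^ 2 = u ^ 2 := by
  rw [div_pow, Real.sq_sqrt hz.le]
  field_simp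

lemma exp_arg_lower {z u : ℝ} (hz : 0 < z) (hu : u ∈ Set.Ioc (0:ℝ) (π * Real.sqrt z)) :
    2 / π ^ 2 * u ^ 2 ≤ z * (1 - Real.cos (u / Real.sqrt z)) := by
  have hsp : 0 < Real.sqrt z := Real.sqrt_pos.mpr hz
  set t := u / Real.sqrt z with htdef
  have ht0 : 0 < t := div_pos hu.1 hsp
  have htπ : t ≤ π := by
    rw [htdef, div_le_iff₀ hsp]
    linarith [hu.2]
  have habs : |t| ≤ π := by rw [abs_of_pos ht0]; exact htπ
  have hcos := Real.cos_le_one_sub_mul_cos_sq habs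
  have ht2 : z * t ^ 2 = u ^ 2 := zt_sq hz
  have step : z * (2 / π ^ 2 * t ^ 2) ≤ z * (1 - Real.cos t) :=
    mul_le_mul_of_nonneg_left (by linarith) hz.le
  calc 2 / π ^ 2 * u ^ 2 = z * (2 / π ^ 2 * t ^ 2) := by rw [← ht2]; ring
    _ ≤ z * (1 - Real.cos t) := step

lemma exp_arg_upper {z u : ℝ} (hz : 0 < z) :
    z * (1 - Real.cos (u / Real.sqrt z)) ≤ u ^ 2 / 2 := by
  have hcos := Real.one_sub_sq_div_two_le_cos (x := u / Real.sqrt z)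
  have ht2 : z * (u / Real.sqrt z) ^ 2 = u ^ 2 := zt_sq hz
  nlinarith [hz]

lemma FD_le {z u : ℝ} (hz : 0 < z) : ‖FD z u‖ ≤ Real.exp (-(2 / π ^ 2) * u ^ 2) := by
  unfold FD
  by_cases h : u ∈ Set.Ioc (0:ℝ) (π * Real.sqrt z)
  · rw [Set.indicator_of_mem h, Real.norm_eq_abs, abs_of_pos (Real.exp_pos _)]
    rw [Real.exp_le_exp, neg_mul, neg_le_neg_iff]
    exact exp_arg_lower hz h
  · rw [Set.indicator_of_notMem h, norm_zero]
    exact (Real.exp_pos _).le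

lemma FN_le {z u : ℝ} (hz : 0 < z) :
    ‖FN z u‖ ≤ Real.exp (-(2 / π ^ 2) * u ^ 2) * (u ^ 2 / 2) := by
  unfold FN
  by_cases h : u ∈ Set.Ioc (0:ℝ) (π * Real.sqrt z)
  · rw [Set.indicator_of_mem h, Real.norm_eq_abs]
    have h1 : 0 ≤ z * (1 - Real.cos (u / Real.sqrt z)) := by
      have := Real.cos_le_one (u / Real.sqrt z); nlinarith
    rw [abs_of_nonneg (by positivity)]
    apply mul_le_mul _ (exp_arg_upper hz) h1 (Real.exp_pos _).le
    rw [Real.exp_le_exp, neg_mul, neg_le_neg_iff]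
    exact exp_arg_lower hz h
  · rw [Set.indicator_of_notMem h, norm_zero]
    positivity

lemma FD_lim (u : ℝ) :
    Tendsto (fun z => FD z u) atTop
      (nhds ((Set.Ioi (0:ℝ)).indicator (fun u => Real.exp (-(1/2) * u ^ 2)) u)) := by
  rcases le_or_gt u 0 with hu | hu
  · have h1 : ∀ z : ℝ, FD z u = 0 := by
      intro z
      unfold FD
      apply Set.indicator_of_notMem
      intro hmem
      exact absurd hmem.1 (not_lt.mpr hu)
    have h2 : (Set.Ioi (0:ℝ)).indicator (fun u => Real.exp (-(1/2) * u ^ 2)) u = 0 :=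
      Set.indicator_of_notMem (by simpa using hu) _
    simp only [h1, h2]
    exact tendsto_const_nhds
  · have h2 : (Set.Ioi (0:ℝ)).indicator (fun u => Real.exp (-(1/2) * u ^ 2)) u
        = Real.exp (-(1/2) * u ^ 2) := Set.indicator_of_mem hu _
    rw [h2]
    have hmain : Tendsto (fun z : ℝ => Real.exp (-(z * (1 - Real.cos (u / Real.sqrt z)))))
        atTop (nhds (Real.exp (-(1/2) * u ^ 2))) := by
      have := (Real.continuous_exp.tendsto (-(u ^ 2 / 2))).comp ((key_lim hu).neg)
      convert this using 2
      ring_nf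
      rfl
      ring_nf
    apply hmain.congr'
    filter_upwards [eventually_ge_atTop (max 1 ((u / π) ^ 2))] with z hz
    have hz1 : (1:ℝ) ≤ z := le_trans (le_max_left _ _) hz
    have hzu : (u / π) ^ 2 ≤ z := le_trans (le_max_right _ _) hz
    have hzpos : (0:ℝ) < z := by linarith
    have hmem : u ∈ Set.Ioc (0:ℝ) (π * Real.sqrt z) := by
      constructor
      · exact hu
      · have : u / π ≤ Real.sqrt z := by
          calc u / π ≤ |u / π| := le_abs_self _
            _ = Real.sqrt ((u / π) ^ 2) := (Real.sqrt_sq_eq_abs _).symm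
            _ ≤ Real.sqrt z := Real.sqrt_le_sqrt hzu
        calc u = π * (u / π) := by field_simp
          _ ≤ π * Real.sqrt z := by
              exact mul_le_mul_of_nonneg_left this Real.pi_pos.le
    show _ = FD z u
    unfold FD
    rw [Set.indicator_of_mem hmem]

lemma FN_lim (u : ℝ) :
    Tendsto (fun z => FN z u) atTop
      (nhds ((Set.Ioi (0:ℝ)).indicator
        (fun u => Real.exp (-(1/2) * u ^ 2) * (u ^ 2 / 2)) u)) := by
  rcases le_or_gt u 0 with hu | hu
  · have h1 : ∀ z : ℝ, FN z u = 0 := by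
      intro z
      unfold FN
      apply Set.indicator_of_notMem
      intro hmem
      exact absurd hmem.1 (not_lt.mpr hu)
    have h2 : (Set.Ioi (0:ℝ)).indicator
        (fun u => Real.exp (-(1/2) * u ^ 2) * (u ^ 2 / 2)) u = 0 :=
      Set.indicator_of_notMem (by simpa using hu) _
    simp only [h1, h2]
    exact tendsto_const_nhds
  · have h2 : (Set.Ioi (0:ℝ)).indicator
        (fun u => Real.exp (-(1/2) * u ^ 2) * (u ^ 2 / 2)) u
        = Real.exp (-(1/2) * u ^ 2) * (u ^ 2 / 2) := Set.indicator_of_mem hu _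
    rw [h2]
    have hexp : Tendsto (fun z : ℝ => Real.exp (-(z * (1 - Real.cos (u / Real.sqrt z)))))
        atTop (nhds (Real.exp (-(1/2) * u ^ 2))) := by
      have := (Real.continuous_exp.tendsto (-(u ^ 2 / 2))).comp ((key_lim hu).neg)
      convert this using 2
      ring_nf
      rfl
      ring_nf
    have hmain := hexp.mul (key_lim hu)
    have hmain2 : Tendsto (fun z : ℝ =>
        Real.exp (-(z * (1 - Real.cos (u / Real.sqrt z)))) * (z * (1 - Real.cos (u / Real.sqrt z))))
        atTop (nhds (Real.exp (-(1/2) * u ^ 2) * (u ^ 2 / 2))) := by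
      convert hmain using 2
    apply hmain2.congr'
    filter_upwards [eventually_ge_atTop (max 1 ((u / π) ^ 2))] with z hz
    have hz1 : (1:ℝ) ≤ z := le_trans (le_max_left _ _) hz
    have hzu : (u / π) ^ 2 ≤ z := le_trans (le_max_right _ _) hz
    have hzpos : (0:ℝ) < z := by linarith
    have hmem : u ∈ Set.Ioc (0:ℝ) (π * Real.sqrt z) := by
      constructor
      · exact hu
      · have : u / π ≤ Real.sqrt z := by
          calc u / π ≤ |u / π| := le_abs_self _
            _ = Real.sqrt ((u / π) ^ 2) := (Real.sqrt_sq_eq_abs _).symm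
            _ ≤ Real.sqrt z := Real.sqrt_le_sqrt hzu
        calc u = π * (u / π) := by field_simp
          _ ≤ π * Real.sqrt z := by
              exact mul_le_mul_of_nonneg_left this Real.pi_pos.le
    show _ = FN z u
    unfold FN
    rw [Set.indicator_of_mem hmem]

lemma bound_N_integrable :
    Integrable (fun u : ℝ => Real.exp (-(2 / π ^ 2) * u ^ 2) * (u ^ 2 / 2)) := by
  have hb : (0:ℝ) < 1 / π ^ 2 := by positivity
  apply Integrable.mono' ((integrable_exp_neg_mul_sq hb).const_mul (π ^ 2 / 2))
  · exact ((Real.continuous_exp.comp (by continuity)).mul (by continuity)).aestronglyMeasurable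
  · refine Filter.Eventually.of_forall (fun u => ?_)
    rw [Real.norm_eq_abs, abs_of_nonneg (by positivity)]
    have key : u ^ 2 / 2 ≤ π ^ 2 / 2 * Real.exp (1 / π ^ 2 * u ^ 2) := by
      have h1 : 1 / π ^ 2 * u ^ 2 ≤ Real.exp (1 / π ^ 2 * u ^ 2) := by
        have := Real.add_one_le_exp (1 / π ^ 2 * u ^ 2)
        nlinarith [sq_nonneg u, hb]
      have h2 := mul_le_mul_of_nonneg_left h1 (show (0:ℝ) ≤ π ^ 2 / 2 by positivity)
      calc u ^ 2 / 2 = π ^ 2 / 2 * (1 / π ^ 2 * u ^ 2) := by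
            field_simp
          _ ≤ π ^ 2 / 2 * Real.exp (1 / π ^ 2 * u ^ 2) := h2
    calc Real.exp (-(2 / π ^ 2) * u ^ 2) * (u ^ 2 / 2)
        ≤ Real.exp (-(2 / π ^ 2) * u ^ 2) * (π ^ 2 / 2 * Real.exp (1 / π ^ 2 * u ^ 2)) := by
          exact mul_le_mul_of_nonneg_left key (Real.exp_pos _).le
      _ = π ^ 2 / 2 * Real.exp (-(1 / π ^ 2) * u ^ 2) := by
          rw [show rexp (-(2 / π ^ 2) * u ^ 2) * (π ^ 2 / 2 * rexp (1 / π ^ 2 * u ^ 2))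
              = π ^ 2 / 2 * (rexp (-(2 / π ^ 2) * u ^ 2) * rexp (1 / π ^ 2 * u ^ 2)) by ring,
            ← Real.exp_add]
          congr 1
          ring_nf

lemma FD_meas (z : ℝ) : AEStronglyMeasurable (FD z) volume := by
  unfold FD
  apply AEStronglyMeasurable.indicator _ measurableSet_Ioc
  exact (Real.continuous_exp.comp (by continuity)).aestronglyMeasurable

lemma FN_meas (z : ℝ) : AEStronglyMeasurable (FN z) volume := by
  unfold FN
  apply AEStronglyMeasurable.indicator _ measurableSet_Ioc
  exact ((Real.continuous_exp.comp (by continuity)).mul (by continuity)).aestronglyMeasurable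

lemma lim_D :
    Tendsto (fun z : ℝ => Real.sqrt z * besselD z) atTop
      (nhds (∫ u in Set.Ioi (0:ℝ), Real.exp (-(1/2) * u ^ 2))) := by
  have h := MeasureTheory.tendsto_integral_filter_of_dominated_convergence
    (μ := volume) (l := atTop) (F := FD)
    (f := (Set.Ioi (0:ℝ)).indicator (fun u => Real.exp (-(1/2) * u ^ 2)))
    (bound := fun u => Real.exp (-(2 / π ^ 2) * u ^ 2))
    (Filter.Eventually.of_forall FD_meas)
    (by
      filter_upwards [eventually_gt_atTop (0:ℝ)] with z hz
      exact Filter.Eventually.of_forall (fun u => FD_le hz))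
    (integrable_exp_neg_mul_sq (by positivity))
    (Filter.Eventually.of_forall FD_lim)
  rw [MeasureTheory.integral_indicator measurableSet_Ioi] at h
  apply h.congr'
  filter_upwards [eventually_gt_atTop (0:ℝ)] with z hz
  exact (subst_D hz).symm

lemma lim_N :
    Tendsto (fun z : ℝ => Real.sqrt z * (z * besselN z)) atTop
      (nhds (∫ u in Set.Ioi (0:ℝ), Real.exp (-(1/2) * u ^ 2) * (u ^ 2 / 2))) := by
  have h := MeasureTheory.tendsto_integral_filter_of_dominated_convergence
    (μ := volume) (l := atTop) (F := FN)
    (f := (Set.Ioi (0:ℝ)).indicator (fun u => Real.exp (-(1/2) * u ^ 2) * (u ^ 2 / 2)))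
    (bound := fun u => Real.exp (-(2 / π ^ 2) * u ^ 2) * (u ^ 2 / 2))
    (Filter.Eventually.of_forall FN_meas)
    (by
      filter_upwards [eventually_gt_atTop (0:ℝ)] with z hz
      exact Filter.Eventually.of_forall (fun u => FN_le hz))
    bound_N_integrable
    (Filter.Eventually.of_forall FN_lim)
  rw [MeasureTheory.integral_indicator measurableSet_Ioi] at h
  apply h.congr'
  filter_upwards [eventually_gt_atTop (0:ℝ)] with z hz
  exact (subst_N hz).symm

lemma J0_pos : 0 < ∫ u in Set.Ioi (0:ℝ), Real.exp (-(1/2) * u ^ 2) := by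
  rw [integral_gaussian_Ioi]
  positivity

lemma J2_eq :
    (∫ u in Set.Ioi (0:ℝ), Real.exp (-(1/2) * u ^ 2) * (u ^ 2 / 2))
      = (1/2) * ∫ u in Set.Ioi (0:ℝ), Real.exp (-(1/2) * u ^ 2) := by
  have h2 := integral_rpow_mul_exp_neg_mul_rpow (p := 2) (q := 2) (b := 1/2)
    (by norm_num) (by norm_num) (by norm_num)
  have h0 := integral_rpow_mul_exp_neg_mul_rpow (p := 2) (q := 0) (b := 1/2)
    (by norm_num) (by norm_num) (by norm_num)
  have e2 : (∫ u in Set.Ioi (0:ℝ), Real.exp (-(1/2) * u ^ 2) * (u ^ 2 / 2))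
      = (1/2) * ∫ x in Set.Ioi (0:ℝ), x ^ (2:ℝ) * Real.exp (-(1/2) * x ^ (2:ℝ)) := by
    rw [← MeasureTheory.integral_const_mul]
    refine MeasureTheory.setIntegral_congr_fun measurableSet_Ioi (fun x hx => ?_)
    have hx0 : (0:ℝ) < x := hx
    rw [show (2:ℝ) = ((2:ℕ):ℝ) by norm_num, Real.rpow_natCast]
    push_cast
    ring
  have e0 : (∫ u in Set.Ioi (0:ℝ), Real.exp (-(1/2) * u ^ 2))
      = ∫ x in Set.Ioi (0:ℝ), x ^ (0:ℝ) * Real.exp (-(1/2) * x ^ (2:ℝ)) := by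
    refine MeasureTheory.setIntegral_congr_fun measurableSet_Ioi (fun x hx => ?_)
    rw [Real.rpow_zero, one_mul, show (2:ℝ) = ((2:ℕ):ℝ) by norm_num, Real.rpow_natCast]
  rw [e2, e0, h2, h0]
  have hG : Real.Gamma ((2 + 1) / 2) = (1/2) * Real.Gamma ((0 + 1) / 2) := by
    rw [show ((2:ℝ) + 1) / 2 = 1/2 + 1 by norm_num, Real.Gamma_add_one (by norm_num)]
    norm_num
  rw [hG]
  have hr : ((1:ℝ)/2) ^ (-((2:ℝ) + 1) / 2) = 2 * ((1:ℝ)/2) ^ (-((0:ℝ) + 1) / 2) := by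
    rw [show (-((2:ℝ) + 1) / 2) = (-1) + (-((0:ℝ) + 1) / 2) by norm_num,
      Real.rpow_add (by norm_num), Real.rpow_neg_one]
    norm_num
  rw [hr]
  ring

/-- The function `φ(z) = z (I₀(z) − I₁(z)) / I₀(z)` tends to `1/2` as `z → +∞`,
and is bounded on `[0, ∞)`. -/
theorem phi_tendsto_half_and_bounded :
    Tendsto (fun z : ℝ => z * (besselI 0 z - besselI 1 z) / besselI 0 z)
      atTop (nhds (1/2)) ∧
    ∃ C : ℝ, ∀ z ∈ Set.Ici (0:ℝ),
      |z * (besselI 0 z - besselI 1 z) / besselI 0 z| ≤ C := by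
  have htend : Tendsto (fun z : ℝ => z * (besselI 0 z - besselI 1 z) / besselI 0 z)
      atTop (nhds (1/2)) := by
    have hdiv := lim_N.div lim_D J0_pos.ne'
    rw [J2_eq] at hdiv
    rw [mul_div_assoc, div_self J0_pos.ne', mul_one] at hdiv
    apply hdiv.congr'
    filter_upwards [eventually_gt_atTop (0:ℝ)] with z hz
    have hs : Real.sqrt z ≠ 0 := (Real.sqrt_pos.mpr hz).ne'
    show Real.sqrt z * (z * besselN z) / (Real.sqrt z * besselD z)
      = z * (besselI 0 z - besselI 1 z) / besselI 0 z
    rw [mul_div_mul_left _ _ hs, phi_eq z]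
  refine ⟨htend, ?_⟩
  have ha := htend.eventually (eventually_le_nhds (by norm_num : (1/2:ℝ) < 1))
  have hb := htend.eventually (eventually_ge_nhds (by norm_num : (-1:ℝ) < 1/2))
  have h1 : ∀ᶠ z in atTop, |z * (besselI 0 z - besselI 1 z) / besselI 0 z| ≤ 1 := by
    filter_upwards [ha, hb] with z h1' h2'
    exact abs_le.mpr ⟨h2', h1'⟩
  obtain ⟨Z, hZ⟩ := eventually_atTop.mp h1
  refine ⟨max 1 (2 * max Z 0), fun z hz => ?_⟩
  rcases le_or_gt Z z with hzZ | hzZ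
  · exact le_trans (hZ z hzZ) (le_max_left _ _)
  · have hz0 : (0:ℝ) ≤ z := hz
    rw [phi_eq]
    have hD := besselD_pos z
    have hN := besselN_nonneg z
    rw [abs_of_nonneg (div_nonneg (mul_nonneg hz0 hN) hD.le)]
    have hle : z * besselN z / besselD z ≤ 2 * z := by
      rw [div_le_iff₀ hD]
      calc z * besselN z ≤ z * (2 * besselD z) :=
            mul_le_mul_of_nonneg_left (besselN_le z) hz0
        _ = 2 * z * besselD z := by ring
    calc z * besselN z / besselD z ≤ 2 * z := hle
      _ ≤ 2 * max Z 0 := by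
          have : z ≤ max Z 0 := le_trans hzZ.le (le_max_left _ _)
          linarith
      _ ≤ max 1 (2 * max Z 0) := le_max_right _ _
end
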